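/- arXiv:1708.04478 — 4 statements merged into one kernel-verified Lean document; each statement's English description precedes it below -/
import Mathlib

section
/- Let Γ be the free group on p ≥ 2 generators and 𝔠 a non-trivial conjugacy class with minimal word length k. Then for every m ≥ 1, the number of elements of 𝔠 of word length k+2m equals (2p-2)(2p-1)^{m-1} · #𝔠_k, where #𝔠_k is the number of elements of 𝔠 of word length k. -/
set_option linter.unusedSectionVars false

namespace Stmt2Aux

open FreeGroup List

variable {α : Type*} [DecidableEq α]

/-- inverse of a letter -/
def invL (a : α × Bool) : α × Bool := (a.1, !a.2)

@[simp] lemma invL_invL (a : α × Bool) : invL (invL a) = a := by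
  simp [invL]

lemma invL_injective : Function.Injective (invL (α := α)) :=
  Function.Involutive.injective invL_invL

@[simp] lemma invL_ne (a : α × Bool) : invL a ≠ a := by
  cases a with
  | mk x b => simp [invL]

lemma eq_invL_comm {a b : α × Bool} : a = invL b ↔ b = invL a := by
  constructor <;> (rintro rfl; simp)

/-- reducedness of a word -/
def Rd (l : List (α × Bool)) : Prop := l.Chain' (fun a b => b ≠ invL a)

lemma rd_iff_chain {l : List (α × Bool)} :
    Rd l ↔ l.Chain' (fun a b => b ≠ invL a) := Iff.rfl

lemma cancel_iff {a b : α × Bool} : (a.1 = b.1 ∧ a.2 = !b.2) ↔ a = invL b := by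
  cases a; cases b; simp [invL, and_comm]

lemma Rd.reduce_eq {l : List (α × Bool)} (h : Rd l) : reduce l = l := by
  induction l with
  | nil => rfl
  | cons x l ih =>
    rw [Rd, List.Chain', List.isChain_cons] at h
    have h2 := ih h.2
    rw [reduce.cons, h2]
    cases l with
    | nil => rfl
    | cons y t =>
      have : ¬ (x.1 = y.1 ∧ x.2 = !y.2) := by
        rw [cancel_iff]
        intro hxy
        exact h.1 y rfl (by rw [hxy]; simp)
      simp [this]

lemma rd_reduce (l : List (α × Bool)) : Rd (reduce l) := by
  induction l with
  | nil => exact List.isChain_nil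
  | cons x l ih =>
    rw [reduce.cons]
    rcases hl : reduce l with _ | ⟨y, t⟩
    · exact List.isChain_singleton x
    · rw [hl] at ih
      by_cases hc : x.1 = y.1 ∧ x.2 = !y.2
      · simp only [hc, if_true]
        exact ih.tail
      · simp only [hc, if_false]
        refine List.isChain_cons_cons.mpr ⟨?_, ih⟩
        rw [cancel_iff] at hc
        rw [Ne, eq_invL_comm]
        exact hc
lemma rd_toWord (x : FreeGroup α) : Rd (toWord x) := by
  rw [← reduce_toWord]; exact rd_reduce _

lemma toWord_mk_of_rd {l : List (α × Bool)} (h : Rd l) : (mk l).toWord = l := by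
  rw [toWord_mk, h.reduce_eq]

lemma norm_mk_of_rd {l : List (α × Bool)} (h : Rd l) : norm (mk l) = l.length := by
  rw [FreeGroup.norm, toWord_mk_of_rd h]

lemma invRev_cons (a : α × Bool) (l : List (α × Bool)) :
    invRev (a :: l) = invRev l ++ [invL a] := by
  simp [invRev, invL]

@[simp] lemma invRev_singleton (a : α × Bool) : invRev [a] = [invL a] := by
  simp [invRev, invL]

lemma Rd.infix {l₁ l₂ : List (α × Bool)} (h : Rd l₂) (h' : l₁ <:+: l₂) : Rd l₁ :=
  List.IsChain.infix h h'


lemma rd_wrap_iff (a : α × Bool) {w : List (α × Bool)} (hw : Rd w) (hw0 : w ≠ []) :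
    Rd ((a :: w) ++ [invL a]) ↔
      (w.head hw0 ≠ invL a ∧ invL a ≠ invL (w.getLast hw0)) := by
  rw [Rd, List.Chain', List.isChain_append, List.isChain_cons]
  simp only [List.head?_eq_head hw0, Option.mem_def, Option.some.injEq, List.isChain_singleton,
    List.head?_cons, List.getLast?_cons, List.getLast?_eq_getLast hw0, Option.getD_some]
  constructor
  · rintro ⟨⟨h1, -⟩, -, h3⟩
    exact ⟨fun he => h1 _ rfl he, fun he => h3 _ rfl _ rfl he⟩
  · rintro ⟨h1, h3⟩
    refine ⟨⟨fun y hy => by rw [← hy]; exact h1, hw⟩, trivial, ?_⟩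
    rintro x hx y rfl
    rw [← hx]; exact h3

lemma invL_eq_iff {a b : α × Bool} : invL a = b ↔ a = invL b := by
  constructor <;> (rintro rfl; simp)

lemma rd_of_sq {v : List (α × Bool)} (h : Rd (v ++ v)) : Rd v :=
  h.infix ⟨[], v, by simp⟩

lemma rd_cube {v : List (α × Bool)} (h : Rd (v ++ v)) : Rd ((v ++ v) ++ v) := by
  rcases eq_or_ne v [] with rfl | hv
  · simpa using h
  rw [Rd, List.Chain', List.isChain_append] at h ⊢
  obtain ⟨h1, h2, h3⟩ := h
  refine ⟨List.isChain_append.mpr ⟨h1, h2, h3⟩, h2, ?_⟩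
  intro x hx y hy
  rw [List.getLast?_append, List.getLast?_eq_getLast hv, Option.or_self] at hx
  exact h3 x (by rw [List.getLast?_eq_getLast hv]; exact hx) y hy

lemma rd_sq_rot {d : α × Bool} {t : List (α × Bool)} (h : Rd ((d :: t) ++ (d :: t))) :
    Rd ((t ++ [d]) ++ (t ++ [d])) := by
  refine (rd_cube h).infix ⟨[d], t, ?_⟩
  simp

lemma rd_sq_rot' {d : α × Bool} {t : List (α × Bool)} (h : Rd ((t ++ [d]) ++ (t ++ [d]))) :
    Rd ((d :: t) ++ (d :: t)) := by
  refine (rd_cube h).infix ⟨t, [d], ?_⟩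
  simp

lemma mk_cons (a : α × Bool) (l : List (α × Bool)) : mk (a :: l) = mk [a] * mk l := by
  rw [mul_mk]; rfl

lemma mk_singleton_inv (a : α × Bool) : (mk [a])⁻¹ = mk [invL a] := by
  rw [inv_mk, invRev_singleton]

lemma mk_decomp (h v : List (α × Bool)) :
    mk ((h ++ v) ++ invRev h) = mk h * mk v * (mk h)⁻¹ := by
  rw [inv_mk, mul_mk, mul_mk]

lemma getLast_of_concat_form {X : Type*} {l l' : List X} {x : X} (hl : l ≠ [])
    (h : l = l' ++ [x]) : l.getLast hl = x := by
  subst h; exact List.getLast_concat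

lemma head_of_cons_form {X : Type*} {l l' : List X} {x : X} (hl : l ≠ [])
    (h : l = x :: l') : l.head hl = x := by
  subst h; rfl

/-- decomposition of a conjugate: reduced word is `h v h⁻¹` with `v` cyclically reduced
of length `k`, representing a conjugate of `c`. -/
def Decomp (c : FreeGroup α) (k : ℕ) (x : FreeGroup α) : Prop :=
  ∃ h v : List (α × Bool), x.toWord = (h ++ v) ++ invRev h ∧ Rd (v ++ v) ∧
    IsConj c (mk v) ∧ v.length = k

lemma decomp_intro {c : FreeGroup α} {k : ℕ} (h v : List (α × Bool))
    (hrd : Rd ((h ++ v) ++ invRev h)) (hvv : Rd (v ++ v)) (hconj : IsConj c (mk v))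
    (hlen : v.length = k) : Decomp c k (mk h * mk v * (mk h)⁻¹) :=
  ⟨h, v, by rw [← mk_decomp, toWord_mk_of_rd hrd], hvv, hconj, hlen⟩

lemma ne_nil_of_isConj {c : FreeGroup α} (hc : c ≠ 1) {v : List (α × Bool)}
    (hconj : IsConj c (mk v)) : v ≠ [] := by
  rintro rfl
  rw [← one_eq_mk] at hconj
  exact hc (isConj_one_left.mp hconj)

lemma Decomp.conj_letter {c : FreeGroup α} (hc : c ≠ 1) {k : ℕ} {x : FreeGroup α}
    (hx : Decomp c k x) (a : α × Bool) : Decomp c k (mk [a] * x * (mk [a])⁻¹) := by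
  obtain ⟨h, v, hw, hvv, hconj, hlen⟩ := hx
  have hv0 : v ≠ [] := ne_nil_of_isConj hc hconj
  have hrd : Rd ((h ++ v) ++ invRev h) := hw ▸ rd_toWord x
  have hxeq : x = mk h * mk v * (mk h)⁻¹ := by
    rw [← mk_toWord (x := x), hw, mk_decomp]
  cases h with
  | cons b h' =>
    have hyeq : mk [a] * x * (mk [a])⁻¹
        = (mk [a] * mk (b :: h')) * mk v * (mk [a] * mk (b :: h'))⁻¹ := by
      rw [hxeq]; group
    by_cases hab : a = invL b
    · have hcan : mk [a] * mk (b :: h') = mk h' := by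
        rw [mk_cons b, ← mul_assoc, hab, ← mk_singleton_inv, inv_mul_cancel, one_mul]
      rw [hyeq, hcan]
      refine decomp_intro h' v ?_ hvv hconj hlen
      refine hrd.infix ⟨[b], [invL b], ?_⟩
      simp [invRev_cons]
    · have hcan : mk [a] * mk (b :: h') = mk (a :: b :: h') := by
        rw [mk_cons a (b :: h'), mul_mk]
      rw [hyeq, hcan]
      refine decomp_intro (a :: b :: h') v ?_ hvv hconj hlen
      have hWne : (((b :: h') ++ v) ++ invRev (b :: h')) ≠ [] := by simp
      have hlist : (((a :: b :: h') ++ v) ++ invRev (a :: b :: h'))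
          = (a :: (((b :: h') ++ v) ++ invRev (b :: h'))) ++ [invL a] := by
        simp [invRev_cons]
      rw [hlist]
      refine (rd_wrap_iff a hrd hWne).mpr ⟨?_, ?_⟩
      · rw [head_of_cons_form (l' := (h' ++ v) ++ invRev (b :: h')) (x := b) hWne (by simp)]
        intro hbe
        exact hab (invL_eq_iff.mp hbe.symm)
      · rw [getLast_of_concat_form (l' := ((b :: h') ++ v) ++ invRev h') (x := invL b) hWne
          (by simp [invRev_cons]), invL_invL]
        intro hbe
        exact hab (invL_eq_iff.mp hbe)
  | nil =>
    have hxv : x = mk v := by simpa [← one_eq_mk] using hxeq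
    have hconj1 : ∀ z : FreeGroup α, (mk [a] * x * (mk [a])⁻¹) = z → IsConj c z := by
      rintro z rfl
      exact hconj.trans (by rw [hxv]; exact isConj_iff.mpr ⟨mk [a], rfl⟩)
    obtain ⟨d, t, rfl⟩ := List.exists_cons_of_ne_nil hv0
    by_cases had : a = invL d
    · -- rotate forward : v = d :: t ↦ t ++ [d]
      have ha1 : mk [a] = (mk [d])⁻¹ := by rw [had, ← mk_singleton_inv]
      have hyeq : mk [a] * x * (mk [a])⁻¹ = mk (t ++ [d]) := by
        rw [hxv, mk_cons d t, ha1, ← mul_mk]; group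
      have hrot := rd_sq_rot hvv
      rw [hyeq, show mk (t ++ [d]) = mk [] * mk (t ++ [d]) * (mk [])⁻¹ by
        rw [← one_eq_mk]; group]
      refine decomp_intro [] (t ++ [d]) ?_ hrot (hconj1 _ hyeq) ?_
      · simpa [invRev] using rd_of_sq hrot
      · simpa using hlen
    · by_cases hlast : (d :: t).getLast (List.cons_ne_nil d t) = a
      · -- rotate backward : v = t' ++ [a] ↦ a :: t'
        set t' := (d :: t).dropLast with ht'
        have hvsplit : d :: t = t' ++ [a] := by
          conv_lhs => rw [← List.dropLast_append_getLast (List.cons_ne_nil d t)]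
          rw [hlast]
        have hvv' : Rd ((t' ++ [a]) ++ (t' ++ [a])) := by rw [← hvsplit]; exact hvv
        have hrot := rd_sq_rot' hvv'
        have hyeq : mk [a] * x * (mk [a])⁻¹ = mk (a :: t') := by
          rw [hxv, hvsplit, ← mul_mk, mk_cons a t']; group
        rw [hyeq, show mk (a :: t') = mk [] * mk (a :: t') * (mk [])⁻¹ by
          rw [← one_eq_mk]; group]
        refine decomp_intro [] (a :: t') ?_ hrot (hconj1 _ hyeq) ?_
        · simpa [invRev] using rd_of_sq hrot
        · have := congrArg List.length hvsplit
          simp at this hlen ⊢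
          omega
      · -- no cancellation
        rw [show mk [a] * x * (mk [a])⁻¹ = mk [a] * mk (d :: t) * (mk [a])⁻¹ by rw [hxv]]
        refine decomp_intro [a] (d :: t) ?_ hvv hconj hlen
        have hlist : (([a] ++ (d :: t)) ++ invRev [a]) = (a :: (d :: t)) ++ [invL a] := by
          simp [invRev_singleton]
        rw [hlist]
        refine (rd_wrap_iff a (rd_of_sq hvv) (List.cons_ne_nil d t)).mpr ⟨?_, ?_⟩
        · simp only [List.head_cons]
          intro hde
          exact had (invL_eq_iff.mp hde.symm)
        · intro hh
          exact hlast (invL_injective hh).symm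
lemma decomp_conj_mk_list {c : FreeGroup α} (hc : c ≠ 1) {k : ℕ} {w₀ : FreeGroup α}
    (h0 : Decomp c k w₀) (l : List (α × Bool)) : Decomp c k (mk l * w₀ * (mk l)⁻¹) := by
  induction l with
  | nil => simpa [← one_eq_mk] using h0
  | cons a l ih =>
    have heq : mk (a :: l) * w₀ * (mk (a :: l))⁻¹
        = mk [a] * (mk l * w₀ * (mk l)⁻¹) * (mk [a])⁻¹ := by
      rw [mk_cons]; group
    rw [heq]
    exact ih.conj_letter hc a

lemma Decomp.of_isConj {c : FreeGroup α} (hc : c ≠ 1) {k : ℕ} {w₀ x : FreeGroup α}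
    (h0 : Decomp c k w₀) (hx : IsConj w₀ x) : Decomp c k x := by
  obtain ⟨g, hg⟩ := isConj_iff.mp hx
  have := decomp_conj_mk_list hc h0 (toWord g)
  rwa [mk_toWord, hg] at this

lemma minimal_cyc_red {c : FreeGroup α} {k : ℕ}
    (hk : IsLeast {n : ℕ | ∃ y : FreeGroup α, IsConj c y ∧ FreeGroup.norm y = n} k)
    {x : FreeGroup α} (hx : IsConj c x) (hn : FreeGroup.norm x = k) :
    Rd (x.toWord ++ x.toWord) := by
  have hrd : Rd x.toWord := rd_toWord x
  rw [Rd, List.Chain', List.isChain_append]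
  refine ⟨hrd, hrd, ?_⟩
  intro e he b hb hbe
  rcases hwx : x.toWord with _ | ⟨b0, t⟩
  · rw [hwx] at hb; simp at hb
  rw [hwx] at he hb
  simp only [List.head?_cons, Option.mem_def, Option.some.injEq] at hb
  subst hb
  rw [FreeGroup.norm, hwx] at hn
  rcases eq_or_ne t [] with rfl | ht
  · simp only [List.getLast?_singleton, Option.mem_def, Option.some.injEq] at he
    subst he
    exact invL_ne b0 hbe.symm
  have htsplit : t = t.dropLast ++ [t.getLast ht] := (List.dropLast_append_getLast ht).symm
  have hee : t.getLast ht = e := by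
    rw [List.getLast?_cons, List.getLast?_eq_getLast ht] at he
    simpa using he
  subst hee
  have hxw : x = mk [b0] * mk t.dropLast * mk [t.getLast ht] := by
    rw [← mk_toWord (x := x), hwx]
    conv_lhs => rw [htsplit]
    rw [mk_cons, ← mul_mk, mul_assoc]
  have hb0 : mk [b0] = (mk [t.getLast ht])⁻¹ := by
    rw [hbe, ← mk_singleton_inv]
  have hy : (mk [b0])⁻¹ * x * mk [b0] = mk t.dropLast := by
    rw [hxw, hb0]; group
  have hcy : IsConj c (mk t.dropLast) :=
    hx.trans (isConj_iff.mpr ⟨(mk [b0])⁻¹, by rw [inv_inv]; exact hy⟩)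
  have h1 : k ≤ FreeGroup.norm (mk t.dropLast) := hk.2 ⟨mk t.dropLast, hcy, rfl⟩
  have h2 : FreeGroup.norm (mk t.dropLast) ≤ t.dropLast.length := norm_mk_le
  have h4 : t.length = t.dropLast.length + 1 := by
    conv_lhs => rw [htsplit]
    simp
  simp only [List.length_cons] at hn
  omega

lemma decomp_exists {c : FreeGroup α} (hc : c ≠ 1) {k : ℕ}
    (hk : IsLeast {n : ℕ | ∃ y : FreeGroup α, IsConj c y ∧ FreeGroup.norm y = n} k)
    {x : FreeGroup α} (hx : IsConj c x) : Decomp c k x := by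
  obtain ⟨w₀, hw₀c, hw₀k⟩ := hk.1
  have h0 : Decomp c k w₀ :=
    ⟨[], w₀.toWord, by simp [invRev], minimal_cyc_red hk hw₀c hw₀k,
      by rw [mk_toWord]; exact hw₀c, hw₀k⟩
  exact h0.of_isConj hc (hw₀c.symm.trans hx)
lemma ncard_biUnion_const {X Y : Type*} {s : Set X} (hs : s.Finite) (f : X → Set Y) (c : ℕ)
    (hfin : ∀ x ∈ s, (f x).Finite) (hcard : ∀ x ∈ s, (f x).ncard = c)
    (hdisj : ∀ x ∈ s, ∀ y ∈ s, x ≠ y → Disjoint (f x) (f y)) :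
    (⋃ x ∈ s, f x).ncard = c * s.ncard := by
  revert hfin hcard hdisj
  refine Set.Finite.induction_on
    (motive := fun s _ => (∀ x ∈ s, (f x).Finite) → (∀ x ∈ s, (f x).ncard = c) →
      (∀ x ∈ s, ∀ y ∈ s, x ≠ y → Disjoint (f x) (f y)) →
      (⋃ x ∈ s, f x).ncard = c * s.ncard) s hs (by simp) ?_
  intro a s ha hsf ih
  intro hfin hcard hdisj
  rw [Set.biUnion_insert]
  have hdisj2 : Disjoint (f a) (⋃ x ∈ s, f x) := by
    simp only [Set.disjoint_iUnion_right]
    intro x hx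
    exact hdisj a (Set.mem_insert a s) x (Set.mem_insert_of_mem a hx)
      (fun h => ha (h ▸ hx))
  have hfin2 : (⋃ x ∈ s, f x).Finite :=
    Set.Finite.biUnion hsf (fun x hx => hfin x (Set.mem_insert_of_mem a hx))
  rw [Set.ncard_union_eq hdisj2 (hfin a (Set.mem_insert a s)) hfin2]
  rw [ih (fun x hx => hfin x (Set.mem_insert_of_mem a hx))
    (fun x hx => hcard x (Set.mem_insert_of_mem a hx))
    (fun x hx y hy => hdisj x (Set.mem_insert_of_mem a hx) y (Set.mem_insert_of_mem a hy))]
  rw [hcard a (Set.mem_insert a s), Set.ncard_insert_of_notMem ha hsf]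
  ring

/-- the set of elements of the conjugacy class of `c` of norm `n` -/
def S (c : FreeGroup α) (n : ℕ) : Set (FreeGroup α) :=
  {x | IsConj c x ∧ FreeGroup.norm x = n}

lemma S_finite [Finite α] (c : FreeGroup α) (n : ℕ) : (S c n).Finite := by
  have hsub : S c n ⊆ toWord ⁻¹' {l : List (α × Bool) | l.length = n} := by
    intro x hx
    exact hx.2
  exact ((List.finite_length_eq (α × Bool) n).preimage toWord_injective.injOn).subset hsub

lemma S_toWord_ne_nil {c : FreeGroup α} (hc : c ≠ 1) {n : ℕ} {x : FreeGroup α}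
    (hx : x ∈ S c n) : x.toWord ≠ [] := by
  rw [Ne, toWord_eq_nil_iff]
  rintro rfl
  exact hc (isConj_one_left.mp hx.1)

/-- conjugation by a single letter -/
def conj1 (a : α × Bool) (x : FreeGroup α) : FreeGroup α := mk [a] * x * (mk [a])⁻¹

/-- the set of letters which lengthen `x` under conjugation -/
def Aset (x : FreeGroup α) : Set (α × Bool) := {a | Rd ((a :: x.toWord) ++ [invL a])}

lemma mem_Aset {a : α × Bool} {x : FreeGroup α} :
    a ∈ Aset x ↔ Rd ((a :: x.toWord) ++ [invL a]) := Iff.rfl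

lemma conj1_eq_mk (a : α × Bool) (x : FreeGroup α) :
    conj1 a x = mk ((a :: x.toWord) ++ [invL a]) := by
  rw [conj1, ← mk_toWord (x := x), mk_singleton_inv, mul_mk, mul_mk, mk_toWord]
  rfl

lemma conj1_toWord {a : α × Bool} {x : FreeGroup α} (ha : a ∈ Aset x) :
    (conj1 a x).toWord = (a :: x.toWord) ++ [invL a] := by
  rw [conj1_eq_mk, toWord_mk_of_rd (mem_Aset.mp ha)]

lemma conj1_isConj (a : α × Bool) (x : FreeGroup α) : IsConj x (conj1 a x) :=
  isConj_iff.mpr ⟨mk [a], rfl⟩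

lemma conj1_mem {c : FreeGroup α} {n : ℕ} {x : FreeGroup α} (hx : x ∈ S c n)
    {a : α × Bool} (ha : a ∈ Aset x) : conj1 a x ∈ S c (n + 2) := by
  refine ⟨hx.1.trans (conj1_isConj a x), ?_⟩
  rw [FreeGroup.norm, conj1_toWord ha]
  have := hx.2
  rw [FreeGroup.norm] at this
  simp [this]
lemma Aset_compl {x : FreeGroup α} (hx0 : x.toWord ≠ []) :
    Aset x = ({invL (x.toWord.head hx0), x.toWord.getLast hx0} : Set (α × Bool))ᶜ := by
  ext a
  rw [mem_Aset, rd_wrap_iff a (rd_toWord x) hx0]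
  simp only [Set.mem_compl_iff, Set.mem_insert_iff, Set.mem_singleton_iff, not_or]
  constructor
  · rintro ⟨h1, h2⟩
    exact ⟨fun he => h1 (eq_invL_comm.mp he), fun he => h2 (by rw [he])⟩
  · rintro ⟨h1, h2⟩
    exact ⟨fun he => h1 (eq_invL_comm.mp he), fun he => h2 (invL_injective he)⟩

lemma card_letters [Fintype α] : Nat.card (α × Bool) = 2 * Fintype.card α := by
  rw [Nat.card_eq_fintype_card, Fintype.card_prod, Fintype.card_bool, mul_comm]

lemma Aset_ncard_pair [Fintype α] {x : FreeGroup α} (hx0 : x.toWord ≠ [])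
    (hne : invL (x.toWord.head hx0) ≠ x.toWord.getLast hx0) :
    (Aset x).ncard = 2 * Fintype.card α - 2 := by
  rw [Aset_compl hx0]
  have h2 := Set.ncard_add_ncard_compl
    ({invL (x.toWord.head hx0), x.toWord.getLast hx0} : Set (α × Bool))
  rw [Set.ncard_pair hne, card_letters] at h2
  omega

lemma Aset_ncard_single [Fintype α] {x : FreeGroup α} (hx0 : x.toWord ≠ [])
    (heq : x.toWord.getLast hx0 = invL (x.toWord.head hx0)) :
    (Aset x).ncard = 2 * Fintype.card α - 1 := by
  rw [Aset_compl hx0, heq, Set.pair_eq_singleton]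
  have h2 := Set.ncard_add_ncard_compl ({invL (x.toWord.head hx0)} : Set (α × Bool))
  rw [Set.ncard_singleton, card_letters] at h2
  omega

lemma getLast_eq_invL_head {c : FreeGroup α} (hc : c ≠ 1) {k : ℕ}
    (hk : IsLeast {n : ℕ | ∃ y : FreeGroup α, IsConj c y ∧ FreeGroup.norm y = n} k) {n : ℕ}
    (hkn : k < n) {x : FreeGroup α} (hx : x ∈ S c n) (hx0 : x.toWord ≠ []) :
    x.toWord.getLast hx0 = invL (x.toWord.head hx0) := by
  obtain ⟨h, v, hw, hvv, hconj, hlen⟩ := decomp_exists hc hk hx.1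
  have hnorm : h.length + v.length + h.length = n := by
    have := hx.2
    rw [FreeGroup.norm, hw] at this
    simp only [List.length_append, invRev_length] at this
    omega
  have hhne : h ≠ [] := by
    rintro rfl
    simp only [List.length_nil] at hnorm
    omega
  obtain ⟨b, h', rfl⟩ := List.exists_cons_of_ne_nil hhne
  rw [head_of_cons_form (l' := (h' ++ v) ++ invRev (b :: h')) (x := b) hx0 (by rw [hw]; simp),
    getLast_of_concat_form (l' := ((b :: h') ++ v) ++ invRev h') (x := invL b) hx0
      (by rw [hw]; simp [invRev_cons])]

lemma S_succ_eq {c : FreeGroup α} (hc : c ≠ 1) {k : ℕ}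
    (hk : IsLeast {n : ℕ | ∃ y : FreeGroup α, IsConj c y ∧ FreeGroup.norm y = n} k) {n : ℕ}
    (hn : k ≤ n) :
    S c (n + 2) = ⋃ x ∈ S c n, (fun a => conj1 a x) '' Aset x := by
  ext y
  simp only [Set.mem_iUnion, Set.mem_image, exists_prop]
  constructor
  · intro hy
    obtain ⟨h, v, hw, hvv, hconj, hlen⟩ := decomp_exists hc hk hy.1
    have hlen2 : h.length + v.length + h.length = n + 2 := by
      have := hy.2
      rw [FreeGroup.norm, hw] at this
      simp only [List.length_append, invRev_length] at this
      omega
    have hhne : h ≠ [] := by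
      rintro rfl
      simp only [List.length_nil] at hlen2
      omega
    obtain ⟨b, h', rfl⟩ := List.exists_cons_of_ne_nil hhne
    set x := mk ((h' ++ v) ++ invRev h') with hxdef
    have hyrd : Rd (((b :: h') ++ v) ++ invRev (b :: h')) := hw ▸ rd_toWord y
    have hxrd : Rd ((h' ++ v) ++ invRev h') :=
      hyrd.infix ⟨[b], [invL b], by simp [invRev_cons]⟩
    have hxw : x.toWord = (h' ++ v) ++ invRev h' := toWord_mk_of_rd hxrd
    have hxconj : IsConj c x := by
      rw [hxdef, mk_decomp]
      exact hconj.trans (isConj_iff.mpr ⟨mk h', rfl⟩)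
    have hxnorm : FreeGroup.norm x = n := by
      rw [FreeGroup.norm, hxw]
      simp only [List.length_append, invRev_length]
      simp only [List.length_cons] at hlen2
      omega
    refine ⟨x, ⟨hxconj, hxnorm⟩, b, ?_, ?_⟩
    · rw [mem_Aset, hxw]
      have hre : (b :: ((h' ++ v) ++ invRev h')) ++ [invL b]
          = ((b :: h') ++ v) ++ invRev (b :: h') := by
        simp [invRev_cons]
      rw [hre]
      exact hyrd
    · rw [conj1, hxdef, mk_decomp, ← mk_toWord (x := y), hw, mk_decomp]
      conv_rhs => rw [mk_cons b h']
      group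
  · rintro ⟨x, hx, a, ha, rfl⟩
    exact conj1_mem hx ha

lemma S_step [Fintype α] {c : FreeGroup α} (hc : c ≠ 1) {k : ℕ}
    (hk : IsLeast {n : ℕ | ∃ y : FreeGroup α, IsConj c y ∧ FreeGroup.norm y = n} k) {n : ℕ}
    (hn : k ≤ n) :
    (S c (n + 2)).ncard =
      (if n = k then 2 * Fintype.card α - 2 else 2 * Fintype.card α - 1) * (S c n).ncard := by
  rw [S_succ_eq hc hk hn]
  refine ncard_biUnion_const (S_finite c n) _ _ ?_ ?_ ?_
  · intro x _
    exact (Set.toFinite (Aset x)).image _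
  · intro x hx
    have hx0 := S_toWord_ne_nil hc hx
    have hinj : Set.InjOn (fun a => conj1 a x) (Aset x) := by
      intro a ha a' ha' he
      have he' : conj1 a x = conj1 a' x := he
      have h1 := conj1_toWord ha
      have h2 := conj1_toWord ha'
      rw [he'] at h1
      have h3 := h1.symm.trans h2
      simp only [List.cons_append, List.cons.injEq] at h3
      exact h3.1
    rw [Set.ncard_image_of_injOn hinj]
    by_cases hnk : n = k
    · rw [if_pos hnk]
      subst hnk
      have hcyc := minimal_cyc_red hk hx.1 hx.2
      rw [Rd, List.Chain', List.isChain_append] at hcyc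
      have hj : x.toWord.head hx0 ≠ invL (x.toWord.getLast hx0) :=
        hcyc.2.2 _ (List.getLast?_eq_getLast hx0) _ (List.head?_eq_head hx0)
      refine Aset_ncard_pair hx0 ?_
      intro he
      exact hj (invL_eq_iff.mp he)
    · rw [if_neg hnk]
      exact Aset_ncard_single hx0
        (getLast_eq_invL_head hc hk (lt_of_le_of_ne hn (Ne.symm hnk)) hx hx0)
  · intro x hx y hy hxy
    rw [Set.disjoint_left]
    rintro z ⟨a, ha, rfl⟩ ⟨a', ha', he⟩
    have he' : conj1 a' y = conj1 a x := he
    have h1 := conj1_toWord ha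
    have h2 := conj1_toWord ha'
    rw [he'] at h2
    have h3 := h2.symm.trans h1
    simp only [List.cons_append, List.cons.injEq] at h3
    obtain ⟨rfl, h4⟩ := h3
    exact hxy (toWord_injective (List.append_cancel_right h4)).symm
lemma S_pow [Fintype α] {c : FreeGroup α} (hc : c ≠ 1) {k : ℕ}
    (hk : IsLeast {n : ℕ | ∃ y : FreeGroup α, IsConj c y ∧ FreeGroup.norm y = n} k)
    (m : ℕ) (hm : 1 ≤ m) :
    (S c (k + 2 * m)).ncard
      = (2 * Fintype.card α - 2) * (2 * Fintype.card α - 1) ^ (m - 1) * (S c k).ncard := by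
  induction m with
  | zero => omega
  | succ m ih =>
    rcases eq_or_ne m 0 with rfl | hm0
    · have h := S_step hc hk (le_refl k)
      rw [if_pos rfl] at h
      simpa using h
    · have hm1 : 1 ≤ m := Nat.one_le_iff_ne_zero.mpr hm0
      have ihm := ih hm1
      have hstep := S_step hc hk (n := k + 2 * m) (by omega)
      rw [if_neg (by omega)] at hstep
      have he1 : k + 2 * (m + 1) = (k + 2 * m) + 2 := by ring
      rw [he1, hstep, ihm]
      obtain ⟨j, rfl⟩ : ∃ j, m = j + 1 := ⟨m - 1, by omega⟩
      have he2 : j + 1 + 1 - 1 = (j + 1 - 1) + 1 := by omega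
      rw [he2, pow_succ]
      ring
end Stmt2Aux
/-- Counting elements of word length `k + 2m` in a non-trivial conjugacy class of the
free group on `p ≥ 2` generators: `#𝔠_{k+2m} = (2p-2)(2p-1)^(m-1) ⬝ #𝔠_k` for `m ≥ 1`. -/
theorem stmt2 (p : ℕ) (hp : 2 ≤ p) (c : FreeGroup (Fin p)) (hc : c ≠ 1) (k : ℕ)
    (hk : IsLeast {n : ℕ | ∃ x : FreeGroup (Fin p), IsConj c x ∧ FreeGroup.norm x = n} k)
    (m : ℕ) (hm : 1 ≤ m) :
    Set.ncard {x : FreeGroup (Fin p) | IsConj c x ∧ FreeGroup.norm x = k + 2 * m}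
      = (2 * p - 2) * (2 * p - 1) ^ (m - 1)
        * Set.ncard {x : FreeGroup (Fin p) | IsConj c x ∧ FreeGroup.norm x = k} := by
  have h := Stmt2Aux.S_pow (α := Fin p) hc hk m hm
  simpa [Stmt2Aux.S, Fintype.card_fin] using h
end

section
/- Let f : Σ* → ℝ be Lipschitz with respect to the metric d_θ (0 < θ < 1) with Lipschitz seminorm |f|_θ. Let g = g_1⋯g_k be a cyclically reduced word of length k and w = w_1⋯w_m a reduced word of length m with w_1 ∉ {g_1, g_k^{-1}}. Then |f^{k+2m}(w^{-1}gw) − f^m(w) − f^k(g) − f^m(w^{-1})| ≤ 2|f|_θ θ/(1−θ), where f^n(x) = Σ_{j=0}^{n-1} f(σ^j x) denotes the Birkhoff sum. -/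
open Classical

/-- Alphabet of `2p` symbols. -/
abbrev Symb (p : ℕ) := Fin p × Bool

/-- Alphabet together with the empty symbol `none`. -/
abbrev OSymb (p : ℕ) := Option (Symb p)

/-- A sequence represents a (finite or infinite) reduced word. -/
def RedSeq (p : ℕ) (x : ℕ → OSymb p) : Prop :=
  (∀ n a b, x n = some a → x (n + 1) = some b → b ≠ (a.1, !a.2)) ∧
  (∀ n, x n = none → x (n + 1) = none)

/-- The shift map. -/
def sh (p : ℕ) (x : ℕ → OSymb p) : ℕ → OSymb p := fun n => x (n + 1)

/-- The metric `d_θ`. -/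
noncomputable def dtheta (p : ℕ) (θ : ℝ) (x y : ℕ → OSymb p) : ℝ :=
  if x = y then 0 else θ ^ sInf {n : ℕ | x n ≠ y n}

/-- The point of `Σ*` associated to a finite word, padded by the empty symbol. -/
def seqOf (p : ℕ) (L : List (Symb p)) : ℕ → OSymb p := fun n => L[n]?

/-- A list is a reduced word. -/
def ListRed (p : ℕ) (w : List (Symb p)) : Prop :=
  List.Chain' (fun a b : Symb p => b ≠ (a.1, !a.2)) w

/-- The formal inverse of a word. -/
def invL (p : ℕ) (L : List (Symb p)) : List (Symb p) :=
  (L.map fun a => (a.1, !a.2)).reverse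

/-- Birkhoff sum `f^n = f + f∘σ + ⋯ + f∘σ^{n-1}`. -/
noncomputable def birk (p : ℕ) (f : (ℕ → OSymb p) → ℝ) (n : ℕ) (x : ℕ → OSymb p) : ℝ :=
  ∑ j ∈ Finset.range n, f ((sh p)^[j] x)

section Aux
variable {p : ℕ}

lemma sh_iter (j : ℕ) (x : ℕ → OSymb p) : (sh p)^[j] x = fun n => x (n + j) := by
  induction j with
  | zero => funext n; simp
  | succ j ih =>
    funext n
    rw [Function.iterate_succ_apply', ih]
    show x (n + 1 + j) = x (n + (j + 1))
    congr 1; omega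

lemma sh_seq (j : ℕ) (L : List (Symb p)) :
    (sh p)^[j] (seqOf p L) = seqOf p (L.drop j) := by
  rw [sh_iter]
  funext n
  show L[n + j]? = (L.drop j)[n]?
  rw [List.getElem?_drop]
  congr 1
  omega

lemma redSeq_of_listRed {L : List (Symb p)} (h : ListRed p L) : RedSeq p (seqOf p L) := by
  constructor
  · intro n a b ha hb
    obtain ⟨hn, ha'⟩ := List.getElem?_eq_some_iff.1 ha
    obtain ⟨hn1, hb'⟩ := List.getElem?_eq_some_iff.1 hb
    have hc := List.isChain_iff_getElem.1 h n (by omega)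
    rw [ha', hb'] at hc
    exact hc
  · intro n hn
    have hlen : L.length ≤ n := by
      by_contra hc
      push_neg at hc
      have hn' : L[n]? = none := hn
      rw [List.getElem?_eq_getElem hc] at hn'
      exact absurd hn' (by simp)
    show L[n + 1]? = none
    exact List.getElem?_eq_none (by omega)

lemma dtheta_le {θ : ℝ} (hθ0 : 0 < θ) (hθ1 : θ < 1) (x y : ℕ → OSymb p) (N : ℕ)
    (h : ∀ n < N, x n = y n) : dtheta p θ x y ≤ θ ^ N := by
  unfold dtheta
  split
  · positivity
  · rename_i hxy
    apply pow_le_pow_of_le_one hθ0.le hθ1.le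
    apply le_csInf
    · by_contra hc
      rw [Set.not_nonempty_iff_eq_empty] at hc
      apply hxy
      funext n
      by_contra hne
      have : n ∈ {n : ℕ | x n ≠ y n} := hne
      simp [hc] at this
    · intro b hb
      by_contra hcb
      exact hb (h b (by omega))

end Aux

section Aux2
variable {p : ℕ}

lemma key {θ : ℝ} (hθ0 : 0 < θ) (hθ1 : θ < 1) {C : ℝ} (hC : 0 ≤ C)
    {f : (ℕ → OSymb p) → ℝ}
    (hf : ∀ x y, RedSeq p x → RedSeq p y → |f x - f y| ≤ C * dtheta p θ x y)
    (A B : List (Symb p)) (hAB : ListRed p (A ++ B)) :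
    |f (seqOf p (A ++ B)) - f (seqOf p A)| ≤ C * θ ^ A.length := by
  have hA : ListRed p A := (List.isChain_append.1 hAB).1
  refine (hf _ _ (redSeq_of_listRed hAB) (redSeq_of_listRed hA)).trans
    (mul_le_mul_of_nonneg_left ?_ hC)
  apply dtheta_le hθ0 hθ1
  intro n hn
  show (A ++ B)[n]? = A[n]?
  exact List.getElem?_append_left hn

lemma birk_add (f : (ℕ → OSymb p) → ℝ) (a b : ℕ) (x : ℕ → OSymb p) :
    birk p f (a + b) x = birk p f a x + birk p f b ((sh p)^[a] x) := by
  unfold birk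
  rw [Finset.sum_range_add]
  congr 1
  apply Finset.sum_congr rfl
  intro j hj
  rw [show a + j = j + a from Nat.add_comm a j, Function.iterate_add_apply]

lemma block {θ : ℝ} (hθ0 : 0 < θ) (hθ1 : θ < 1) {C : ℝ} (hC : 0 ≤ C)
    {f : (ℕ → OSymb p) → ℝ}
    (hf : ∀ x y, RedSeq p x → RedSeq p y → |f x - f y| ≤ C * dtheta p θ x y)
    (A B : List (Symb p)) (hAB : ListRed p (A ++ B)) :
    |birk p f A.length (seqOf p (A ++ B)) - birk p f A.length (seqOf p A)|
      ≤ C * θ / (1 - θ) := by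
  unfold birk
  rw [← Finset.sum_sub_distrib]
  have hterm : ∀ j ∈ Finset.range A.length,
      |f ((sh p)^[j] (seqOf p (A ++ B))) - f ((sh p)^[j] (seqOf p A))|
        ≤ C * θ ^ (A.length - j) := by
    intro j hj
    rw [Finset.mem_range] at hj
    have hd : (A ++ B).drop j = A.drop j ++ B :=
      List.drop_append_of_le_length (by omega)
    rw [sh_seq, sh_seq, hd]
    have hred : ListRed p (A.drop j ++ B) := hd ▸ List.IsChain.drop hAB j
    have := key hθ0 hθ1 hC hf (A.drop j) B hred
    rwa [List.length_drop] at this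
  have hgeo : ∑ j ∈ Finset.range A.length, θ ^ (A.length - j) ≤ θ / (1 - θ) := by
    have e : ∑ j ∈ Finset.range A.length, θ ^ (A.length - j)
        = θ * ∑ j ∈ Finset.range A.length, θ ^ j := by
      rw [Finset.mul_sum, ← Finset.sum_range_reflect (fun j => θ * θ ^ j) A.length]
      apply Finset.sum_congr rfl
      intro j hj
      rw [Finset.mem_range] at hj
      rw [← pow_succ']
      congr 1
      omega
    have hsum : ∑ j ∈ Finset.range A.length, θ ^ j ≤ 1 / (1 - θ) := by
      rw [geom_sum_eq (by linarith), show θ ^ A.length - 1 = -(1 - θ ^ A.length) by ring,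
        show θ - 1 = -(1 - θ) by ring, neg_div_neg_eq]
      gcongr
      · nlinarith [pow_nonneg hθ0.le A.length]
    calc ∑ j ∈ Finset.range A.length, θ ^ (A.length - j)
        = θ * ∑ j ∈ Finset.range A.length, θ ^ j := e
      _ ≤ θ * (1 / (1 - θ)) := mul_le_mul_of_nonneg_left hsum hθ0.le
      _ = θ / (1 - θ) := by ring
  calc |∑ j ∈ Finset.range A.length,
          (f ((sh p)^[j] (seqOf p (A ++ B))) - f ((sh p)^[j] (seqOf p A)))|
      ≤ ∑ j ∈ Finset.range A.length,
          |f ((sh p)^[j] (seqOf p (A ++ B))) - f ((sh p)^[j] (seqOf p A))| :=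
        Finset.abs_sum_le_sum_abs _ _
    _ ≤ ∑ j ∈ Finset.range A.length, C * θ ^ (A.length - j) := Finset.sum_le_sum hterm
    _ = C * ∑ j ∈ Finset.range A.length, θ ^ (A.length - j) := by rw [Finset.mul_sum]
    _ ≤ C * (θ / (1 - θ)) := mul_le_mul_of_nonneg_left hgeo hC
    _ = C * θ / (1 - θ) := by ring

lemma invL_red {W : List (Symb p)} (h : ListRed p W) : ListRed p (invL p W) := by
  unfold ListRed invL List.Chain'
  rw [List.isChain_reverse, List.isChain_map]
  refine List.IsChain.imp ?_ h
  intro a b hab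
  show (a.1, !a.2) ≠ ((b.1, !b.2).1, !(b.1, !b.2).2)
  simp only [Bool.not_not, Prod.mk.eta]
  exact fun he => hab he.symm

end Aux2

/-- Key estimate: for `f` Lipschitz (with constant `C`) on the reduced words with
respect to `d_θ`, for `g` cyclically reduced of length `k` and `w` reduced of length `m`
whose first letter differs from the first letter of `g` and the inverse of the last
letter of `g`, one has
`|f^{k+2m}(w⁻¹gw) − f^m(w) − f^k(g) − f^m(w⁻¹)| ≤ 2Cθ/(1−θ)`. -/
theorem stmt10 (p : ℕ) (hp : 2 ≤ p) (θ : ℝ) (hθ0 : 0 < θ) (hθ1 : θ < 1)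
    (C : ℝ) (f : (ℕ → OSymb p) → ℝ)
    (hf : ∀ x y, RedSeq p x → RedSeq p y → |f x - f y| ≤ C * dtheta p θ x y)
    (G W : List (Symb p)) (k m : ℕ)
    (hG : ListRed p G) (hGlen : G.length = k) (hk : 1 ≤ k)
    (hGcyc : ∀ a ∈ G.head?, ∀ b ∈ G.getLast?, a ≠ (b.1, !b.2))
    (hW : ListRed p W) (hWlen : W.length = m)
    (hWhead : ∀ a ∈ W.head?,
      (∀ b ∈ G.head?, a ≠ b) ∧ (∀ b ∈ G.getLast?, a ≠ (b.1, !b.2))) :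
    |birk p f (k + 2 * m) (seqOf p (invL p W ++ G ++ W))
        - birk p f m (seqOf p W) - birk p f k (seqOf p G)
        - birk p f m (seqOf p (invL p W))|
      ≤ 2 * C * θ / (1 - θ) := by
  -- C is nonnegative
  have hC : 0 ≤ C := by
    by_contra hc
    push_neg at hc
    set a : Symb p := (⟨0, by omega⟩, true) with ha
    have hfxy := hf (seqOf p []) (seqOf p [a])
      (redSeq_of_listRed List.isChain_nil)
      (redSeq_of_listRed (List.isChain_singleton a))
    have hne : seqOf p ([] : List (Symb p)) ≠ seqOf p [a] := by
      intro he
      have := congrFun he 0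
      simp [seqOf] at this
    rw [dtheta, if_neg hne] at hfxy
    have hpos : (0:ℝ) < θ ^ sInf {n | seqOf p ([] : List (Symb p)) n ≠ seqOf p [a] n} :=
      pow_pos hθ0 _
    nlinarith [abs_nonneg (f (seqOf p []) - f (seqOf p [a]))]
  have hGne : G ≠ [] := by
    intro h
    rw [h] at hGlen
    simp at hGlen
    omega
  have hlenInv : (invL p W).length = m := by simp [invL, hWlen]
  have hlastInv : (invL p W).getLast? = Option.map (fun a : Symb p => (a.1, !a.2)) W.head? := by
    unfold invL
    rw [List.getLast?_reverse, List.head?_map]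
  -- reducedness of the concatenations
  have hGW : ListRed p (G ++ W) := by
    refine List.isChain_append.2 ⟨hG, hW, ?_⟩
    intro x hx y hy
    exact (hWhead y hy).2 x hx
  have hM : ListRed p (invL p W ++ (G ++ W)) := by
    refine List.isChain_append.2 ⟨invL_red hW, hGW, ?_⟩
    intro x hx y hy
    rw [hlastInv] at hx
    obtain ⟨a, ha, rfl⟩ := Option.mem_map.1 hx
    rw [List.head?_append, Option.or_of_isSome (List.isSome_head?.2 hGne)] at hy
    show y ≠ ((a.1, !a.2).1, !(a.1, !a.2).2)
    simp only [Bool.not_not, Prod.mk.eta]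
    exact Ne.symm ((hWhead a ha).1 y hy)
  -- drops
  have hdm : (invL p W ++ (G ++ W)).drop m = G ++ W := by
    rw [← hlenInv]
    exact List.drop_left
  have hdmk : (invL p W ++ (G ++ W)).drop (m + k) = W := by
    rw [← List.append_assoc,
      show m + k = (invL p W ++ G).length by simp [List.length_append, hlenInv, hGlen]]
    exact List.drop_left
  rw [show invL p W ++ G ++ W = invL p W ++ (G ++ W) from List.append_assoc _ _ _]
  rw [show k + 2 * m = m + k + m by ring, birk_add f (m + k) m, birk_add f m k,
    sh_seq, sh_seq, hdm, hdmk]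
  have e : birk p f m (seqOf p (invL p W ++ (G ++ W))) + birk p f k (seqOf p (G ++ W))
        + birk p f m (seqOf p W)
        - birk p f m (seqOf p W) - birk p f k (seqOf p G) - birk p f m (seqOf p (invL p W))
      = (birk p f m (seqOf p (invL p W ++ (G ++ W))) - birk p f m (seqOf p (invL p W)))
        + (birk p f k (seqOf p (G ++ W)) - birk p f k (seqOf p G)) := by
    ring
  rw [e]
  have hb1 := block hθ0 hθ1 hC hf (invL p W) (G ++ W) hM
  rw [hlenInv] at hb1
  have hb2 := block hθ0 hθ1 hC hf G W hGW
  rw [hGlen] at hb2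
  calc |(birk p f m (seqOf p (invL p W ++ (G ++ W))) - birk p f m (seqOf p (invL p W)))
        + (birk p f k (seqOf p (G ++ W)) - birk p f k (seqOf p G))|
      ≤ |birk p f m (seqOf p (invL p W ++ (G ++ W))) - birk p f m (seqOf p (invL p W))|
        + |birk p f k (seqOf p (G ++ W)) - birk p f k (seqOf p G)| := abs_add_le _ _
    _ ≤ C * θ / (1 - θ) + C * θ / (1 - θ) := add_le_add hb1 hb2
    _ = 2 * C * θ / (1 - θ) := by ring
end

section
/- Let Γ be the free group on p ≥ 2 generators, 𝔠 a non-trivial conjugacy class with minimal word length k, and h = log(2p-1). Then the limit lim_{m→∞} #𝔠_{k+2m}/e^{mh} exists and equals (2p-2)(2p-1)^{-1}·#𝔠_k, where #𝔠_n is the number of elements of 𝔠 of word length n. -/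
open Filter
open scoped Topology

namespace Stmt16Aux
open FreeGroup List


variable {α : Type*} [DecidableEq α]

abbrev inv1 (x : α × Bool) : α × Bool := (x.1, !x.2)

set_option linter.unusedSectionVars false

lemma inv1_inv1 (x : α × Bool) : inv1 (inv1 x) = x := by cases x; simp

lemma inv1_inj {x y : α × Bool} (h : inv1 x = inv1 y) : x = y := by
  cases x; cases y; simpa using h

lemma cancel_iff (x h : α × Bool) : (x.1 = h.1 ∧ x.2 = !h.2) ↔ h = inv1 x := by
  constructor
  · rintro ⟨h1, h2⟩; cases h; cases x; simp_all
  · rintro rfl; simp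

def Red' : List (α × Bool) → Prop := List.Chain' (fun a b => b ≠ inv1 a)

lemma red'_reduce (w : List (α × Bool)) : Red' (reduce w) := by
  induction w with
  | nil => simp [Red', reduce, List.Chain']
  | cons a t ih =>
    rw [reduce.cons]
    rcases h : reduce t with _ | ⟨b, t2⟩
    · simp [Red', List.Chain']
    · rw [h] at ih
      by_cases hc : a.1 = b.1 ∧ a.2 = !b.2
      · simp only [if_pos hc]
        exact ih.tail
      · simp only [if_neg hc]
        rw [cancel_iff] at hc
        exact (List.isChain_cons_cons.2 ⟨hc, ih⟩)

lemma reduce_eq_self {w : List (α × Bool)} (h : Red' w) : reduce w = w := by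
  induction w with
  | nil => rfl
  | cons a t ih =>
    have ht : Red' t := h.tail
    rw [reduce.cons, ih ht]
    cases t with
    | nil => rfl
    | cons b t2 =>
      have hab : b ≠ inv1 a := (List.isChain_cons_cons.1 h).1
      have : ¬(a.1 = b.1 ∧ a.2 = !b.2) := by rw [cancel_iff]; exact hab
      simp only [if_neg this]

lemma red'_toWord (x : FreeGroup α) : Red' x.toWord := by
  rw [← reduce_toWord x]; exact red'_reduce _

lemma toWord_mk' {w : List (α × Bool)} (h : Red' w) : (mk w).toWord = w := by
  rw [toWord_mk, reduce_eq_self h]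

lemma norm_mk' {w : List (α × Bool)} (h : Red' w) : norm (mk w) = w.length := by
  show (mk w).toWord.length = w.length
  rw [toWord_mk' h]

lemma invRev_cons (a : α × Bool) (l : List (α × Bool)) :
    invRev (a :: l) = invRev l ++ [inv1 a] := by
  simp [invRev]

lemma invRev_singleton (a : α × Bool) : invRev [a] = [inv1 a] := by simp [invRev]



def CR (w : List (α × Bool)) : Prop := ∀ a ∈ w.head?, ∀ b ∈ w.getLast?, b ≠ inv1 a

lemma cr_nil : CR ([] : List (α × Bool)) := by intro a ha; simp at ha

lemma ne_inv1_self (a : α × Bool) : a ≠ inv1 a := by cases a; simp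

lemma not_cr_decomp {w : List (α × Bool)} (h : ¬ CR w) :
    ∃ a s, w = a :: (s ++ [inv1 a]) := by
  unfold CR at h
  push_neg at h
  obtain ⟨a, ha, b, hb, hab⟩ := h
  cases w with
  | nil => simp at ha
  | cons c t =>
    simp only [List.head?_cons, Option.mem_def, Option.some.injEq] at ha
    subst ha
    cases ht : t with
    | nil =>
      subst ht
      simp only [List.getLast?_singleton, Option.mem_def, Option.some.injEq] at hb
      subst hb
      exact absurd hab (ne_inv1_self c)
    | cons d t2 =>
      subst ht
      have hne : (d :: t2) ≠ [] := by simp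
      refine ⟨c, (d :: t2).dropLast, ?_⟩
      rw [List.getLast?_cons_cons] at hb
      have hgl : (d :: t2).getLast hne = b := by
        have h2 := List.getLast?_eq_getLast hne
        rw [h2] at hb
        simpa using hb
      rw [← hab, ← hgl, List.dropLast_append_getLast hne]

lemma decomp (x : FreeGroup α) :
    ∃ u y, CR (toWord y) ∧ x = FreeGroup.mk u * y * (FreeGroup.mk u)⁻¹ ∧
      x.toWord = u ++ y.toWord ++ invRev u := by
  suffices H : ∀ n (x : FreeGroup α), norm x = n → ∃ u y, CR (toWord y) ∧
      x = FreeGroup.mk u * y * (FreeGroup.mk u)⁻¹ ∧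
      x.toWord = u ++ y.toWord ++ invRev u from H _ x rfl
  intro n
  induction n using Nat.strong_induction_on with
  | _ n ih =>
    intro x hx
    by_cases hcr : CR x.toWord
    · refine ⟨[], x, hcr, by simp [one_eq_mk.symm], by simp [invRev]⟩
    · obtain ⟨a, s, hw⟩ := not_cr_decomp hcr
      have hred : Red' x.toWord := red'_toWord x
      have hs : Red' s := by
        rw [hw] at hred
        exact hred.infix ⟨[a], [inv1 a], by simp⟩
      have hys : (FreeGroup.mk s).toWord = s := toWord_mk' hs
      have hns : norm (FreeGroup.mk s) = s.length := norm_mk' hs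
      have hlen : norm x = s.length + 2 := by
        show x.toWord.length = _
        rw [hw]; simp
      have hlt : s.length < n := by omega
      obtain ⟨u', y, hcy, hxy, hty⟩ := ih s.length hlt (FreeGroup.mk s) hns
      refine ⟨a :: u', y, hcy, ?_, ?_⟩
      · have hxw : x = FreeGroup.mk (x.toWord) := mk_toWord.symm
        rw [hxw, hw]
        have h0 : (a :: (s ++ [inv1 a])) = [a] ++ s ++ [inv1 a] := by simp
        rw [h0, ← mul_mk, ← mul_mk, hxy]
        have h1 : FreeGroup.mk [inv1 a] = (FreeGroup.mk [a])⁻¹ := by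
          rw [inv_mk, invRev_singleton]
        have h2 : FreeGroup.mk (a :: u') = FreeGroup.mk [a] * FreeGroup.mk u' := by
          rw [mul_mk]; rfl
        rw [h1, h2]
        group
      · rw [hw, hys] at *
        rw [hty, invRev_cons]
        simp

lemma head?_invRev (w : List (α × Bool)) : (invRev w).head? = w.getLast?.map inv1 := by
  rw [invRev, List.head?_reverse, List.getLast?_map]

lemma getLast?_invRev (w : List (α × Bool)) : (invRev w).getLast? = w.head?.map inv1 := by
  rw [invRev, List.getLast?_reverse, List.head?_map]

lemma cr_invRev {w : List (α × Bool)} (h : CR w) : CR (invRev w) := by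
  intro a ha b hb
  rw [head?_invRev] at ha
  rw [getLast?_invRev] at hb
  obtain ⟨l, hl, rfl⟩ := Option.map_eq_some_iff.1 ha
  obtain ⟨h', hh, rfl⟩ := Option.map_eq_some_iff.1 hb
  intro he
  exact h h' hh l hl (by cases h'; cases l; simp_all)

lemma invRev_eq_nil_iff {w : List (α × Bool)} : invRev w = [] ↔ w = [] := by
  constructor
  · intro h; have := congrArg List.length h; simpa [invRev_length] using this
  · rintro rfl; simp [invRev]

/-- no-cancellation single-letter conjugation -/
lemma conj_letter {y : FreeGroup α} (hy : y ≠ 1) (a : α × Bool)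
    (h1 : ∀ h ∈ y.toWord.head?, h ≠ inv1 a) (h2 : ∀ l ∈ y.toWord.getLast?, l ≠ a) :
    (FreeGroup.mk [a] * y * (FreeGroup.mk [a])⁻¹).toWord = a :: (y.toWord ++ [inv1 a]) := by
  have hY : y.toWord ≠ [] := fun h => hy (toWord_eq_nil_iff.1 h)
  have hred : Red' (a :: (y.toWord ++ [inv1 a])) := by
    rw [Red', List.Chain', List.isChain_cons]
    constructor
    · intro z hz
      rw [List.head?_append] at hz
      rcases hY' : y.toWord.head? with _ | h
      · exact absurd hY' (by simpa [List.head?_eq_none_iff] using hY)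
      · rw [hY'] at hz; simp at hz; subst hz
        exact h1 h hY'
    · rw [List.isChain_append]
      refine ⟨(red'_toWord y), by simp [Red'], ?_⟩
      intro l hl z hz
      simp only [List.head?_cons, Option.mem_def, Option.some.injEq] at hz
      subst hz
      intro he
      exact h2 l hl (by cases a; cases l; simp_all)
  have heq : FreeGroup.mk [a] * y * (FreeGroup.mk [a])⁻¹
      = FreeGroup.mk (a :: (y.toWord ++ [inv1 a])) := by
    conv_lhs => rw [← mk_toWord (x := y)]
    rw [inv_mk, invRev_singleton, mul_mk, mul_mk]
    rfl
  rw [heq, toWord_mk' hred]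

/-- cancellation at the front: head of y is a⁻¹ -/
lemma conj_letter_cancel {y : FreeGroup α} (hcr : CR y.toWord) {a : α × Bool}
    (hh : y.toWord.head? = some (inv1 a)) :
    ∃ y2 : FreeGroup α, CR y2.toWord ∧ norm y2 = norm y ∧
      FreeGroup.mk [a] * y * (FreeGroup.mk [a])⁻¹ = y2 := by
  rcases hY : y.toWord with _ | ⟨h, t⟩
  · rw [hY] at hh; simp at hh
  · have hh' : h = inv1 a := by rw [hY] at hh; simpa using hh
    have hredY : Red' (h :: t) := by rw [← hY]; exact red'_toWord y
    have hredt : Red' t := hredY.tail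
    -- the new word
    have hrednew : Red' (t ++ [inv1 a]) := by
      rw [Red', List.Chain', List.isChain_append]
      refine ⟨hredt, by simp [Red'], ?_⟩
      intro l hl z hz
      simp only [List.head?_cons, Option.mem_def, Option.some.injEq] at hz
      subst hz
      intro he
      have hla : l = a := by cases a; cases l; simp_all
      -- l is the last of y.toWord, head is inv1 a; CR says l ≠ inv1 (inv1 a) = a
      have hlast : (h :: t).getLast? = some l := by

        cases t with
        | nil => simp at hl
        | cons b t2 => rw [List.getLast?_cons_cons]; exact hl
      have := hcr h (by rw [hY]; simp) l (by rw [hY]; exact hlast)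
      rw [hh'] at this
      exact this (by rw [hla]; cases a; simp)
    refine ⟨FreeGroup.mk (t ++ [inv1 a]), ?_, ?_, ?_⟩
    · rw [toWord_mk' hrednew]
      intro p hp q hq
      rw [List.getLast?_append] at hq
      simp only [List.getLast?_singleton, Option.some_or, Option.or_some, Option.mem_def,
        Option.some.injEq] at hq
      subst hq
      cases t with
      | nil =>
        simp only [List.nil_append, List.head?_cons, Option.mem_def, Option.some.injEq] at hp
        subst hp
        exact (ne_inv1_self _)
      | cons b t2 =>
        simp only [List.cons_append, List.head?_cons, Option.mem_def, Option.some.injEq] at hp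
        -- need inv1 a ≠ inv1 p ; p = b, a = inv1 h, reduced: b ≠ inv1 h
        have hb : b ≠ inv1 h := (List.isChain_cons_cons.1 hredY).1
        intro he
        have hap : a = p := by cases a; cases p; simp_all
        apply hb
        rw [hp, ← hap, hh', inv1_inv1]
    · show (FreeGroup.mk (t ++ [inv1 a])).toWord.length = y.toWord.length
      rw [toWord_mk' hrednew, hY]
      simp
    · have h1 : FreeGroup.mk [a] * y = FreeGroup.mk t := by
        conv_lhs => rw [← mk_toWord (x := y)]
        rw [hY, mul_mk]
        have : reduce (a :: h :: t) = t := by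
          rw [reduce.cons, reduce_eq_self hredY]
          have : a.1 = h.1 ∧ a.2 = !h.2 := by rw [hh']; cases a; simp
          simp [this]
        show FreeGroup.mk (a :: h :: t) = FreeGroup.mk t
        rw [← reduce.self (L := a :: h :: t), this]
      rw [h1, inv_mk, invRev_singleton, mul_mk]

lemma conj_letter_cr {y : FreeGroup α} (hy : y ≠ 1) (hcr : CR y.toWord) (a : α × Bool) :
    (∃ y2, CR y2.toWord ∧ FreeGroup.norm y2 = FreeGroup.norm y ∧
        FreeGroup.mk [a] * y * (FreeGroup.mk [a])⁻¹ = y2) ∨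
    (FreeGroup.mk [a] * y * (FreeGroup.mk [a])⁻¹).toWord = a :: (y.toWord ++ [inv1 a]) := by
  by_cases h1 : y.toWord.head? = some (inv1 a)
  · exact Or.inl (conj_letter_cancel hcr h1)
  by_cases h2 : y.toWord.getLast? = some a
  · left
    have hhead : (y⁻¹).toWord.head? = some (inv1 a) := by
      rw [toWord_inv, head?_invRev, h2]; rfl
    have hcrinv : CR (y⁻¹).toWord := by rw [toWord_inv]; exact cr_invRev hcr
    obtain ⟨y2, hc2, hn2, he2⟩ := conj_letter_cancel hcrinv hhead
    refine ⟨y2⁻¹, ?_, ?_, ?_⟩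
    · rw [toWord_inv]; exact cr_invRev hc2
    · rw [norm_inv_eq, hn2, norm_inv_eq]
    · rw [← he2]; group
  · right
    apply conj_letter hy a
    · intro h hh e
      rw [Option.mem_def] at hh
      exact h1 (by rw [hh, e])
    · intro l hl e
      rw [Option.mem_def] at hl
      exact h2 (by rw [hl, e])

lemma conj_cr (w : List (α × Bool)) {y : FreeGroup α} (hy : y ≠ 1) (hcr : CR y.toWord) :
    ∃ u y', CR y'.toWord ∧ FreeGroup.norm y' = FreeGroup.norm y ∧
      FreeGroup.mk w * y * (FreeGroup.mk w)⁻¹ = FreeGroup.mk u * y' * (FreeGroup.mk u)⁻¹ ∧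
      (FreeGroup.mk w * y * (FreeGroup.mk w)⁻¹).toWord = u ++ y'.toWord ++ invRev u := by
  induction w with
  | nil =>
    refine ⟨[], y, hcr, rfl, rfl, ?_⟩
    rw [← one_eq_mk]
    simp [invRev]
  | cons a t ih =>
    obtain ⟨u, y', hc', hn', he', ht'⟩ := ih
    have hy' : y' ≠ 1 := by
      intro h
      apply hy
      rw [← FreeGroup.norm_eq_zero, ← hn', h, FreeGroup.norm_one]
    set z0 := FreeGroup.mk t * y * (FreeGroup.mk t)⁻¹ with hz0def
    have hsplit : FreeGroup.mk (a :: t) * y * (FreeGroup.mk (a :: t))⁻¹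
        = FreeGroup.mk [a] * z0 * (FreeGroup.mk [a])⁻¹ := by
      have : FreeGroup.mk (a :: t) = FreeGroup.mk [a] * FreeGroup.mk t := by rw [mul_mk]; rfl
      rw [this, hz0def]; group
    rw [hsplit]
    cases u with
    | nil =>
      have hz0 : z0 = y' := by rw [he', ← one_eq_mk]; group
      rcases conj_letter_cr hy' hc' a with ⟨y2, hc2, hn2, he2⟩ | hw2
      · refine ⟨[], y2, hc2, by rw [hn2, hn'], ?_, ?_⟩
        · rw [hz0, he2, ← one_eq_mk]; group
        · rw [hz0, he2]
          simp [invRev]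
      · refine ⟨[a], y', hc', hn', ?_, ?_⟩
        · rw [hz0]
        · rw [hz0, hw2, invRev_singleton]
          simp
    | cons c t' =>
      have hz0w : z0.toWord = (c :: t') ++ y'.toWord ++ invRev (c :: t') := ht'
      have hz0red : Red' z0.toWord := red'_toWord z0
      have hwordeq : z0.toWord = [c] ++ (t' ++ y'.toWord ++ invRev t') ++ [inv1 c] := by
        rw [hz0w, invRev_cons]; simp
      by_cases hca : c = inv1 a
      · -- cancellation
        have hred : Red' (t' ++ y'.toWord ++ invRev t') := by
          rw [hwordeq] at hz0red
          exact hz0red.infix ⟨[c], [inv1 c], rfl⟩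
        have hredu : Red' (c :: t') := by
          rw [hz0w] at hz0red
          exact hz0red.infix ⟨[], y'.toWord ++ invRev (c :: t'), by simp⟩
        have hmk : FreeGroup.mk [a] * FreeGroup.mk (c :: t') = FreeGroup.mk t' := by
          rw [mul_mk]
          show FreeGroup.mk (a :: c :: t') = FreeGroup.mk t'
          have hr : reduce (a :: c :: t') = t' := by
            rw [reduce.cons, reduce_eq_self hredu]
            have : a.1 = c.1 ∧ a.2 = !c.2 := (cancel_iff a c).2 hca
            simp [this]
          rw [← reduce.self (L := a :: c :: t'), hr]
        refine ⟨t', y', hc', hn', ?_, ?_⟩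
        · rw [he']
          have : FreeGroup.mk [a] * (FreeGroup.mk (c :: t') * y' * (FreeGroup.mk (c :: t'))⁻¹)
              * (FreeGroup.mk [a])⁻¹
              = (FreeGroup.mk [a] * FreeGroup.mk (c :: t')) * y'
                * (FreeGroup.mk [a] * FreeGroup.mk (c :: t'))⁻¹ := by group
          rw [this, hmk]
        · have heq2 : FreeGroup.mk [a] * z0 * (FreeGroup.mk [a])⁻¹
              = FreeGroup.mk (t' ++ y'.toWord ++ invRev t') := by
            rw [he']
            have : FreeGroup.mk [a] * (FreeGroup.mk (c :: t') * y' * (FreeGroup.mk (c :: t'))⁻¹)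
                * (FreeGroup.mk [a])⁻¹
                = (FreeGroup.mk [a] * FreeGroup.mk (c :: t')) * y'
                  * (FreeGroup.mk [a] * FreeGroup.mk (c :: t'))⁻¹ := by group
            rw [this, hmk]
            conv_lhs => rw [← mk_toWord (x := y')]
            rw [inv_mk, mul_mk, mul_mk, List.append_assoc]
          rw [heq2, toWord_mk' hred]
      · -- no cancellation
        have hz0ne : z0 ≠ 1 := by
          intro h
          have : z0.toWord = [] := by rw [h, toWord_one]
          rw [hz0w] at this; simp at this
        have h1 : ∀ h ∈ z0.toWord.head?, h ≠ inv1 a := by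
          intro h hh
          rw [Option.mem_def, hz0w] at hh
          simp only [List.cons_append, List.head?_cons, Option.some.injEq] at hh
          subst hh; exact hca
        have h2 : ∀ l ∈ z0.toWord.getLast?, l ≠ a := by
          intro l hl
          rw [Option.mem_def, hwordeq] at hl
          rw [List.getLast?_append] at hl
          simp only [List.getLast?_singleton, Option.some_or, Option.or_some, Option.some.injEq] at hl
          subst hl
          intro he
          exact hca (by rw [← he, inv1_inv1])
        have hw2 := conj_letter hz0ne a h1 h2
        refine ⟨a :: c :: t', y', hc', hn', ?_, ?_⟩
        · rw [he']
          have hmm : FreeGroup.mk (a :: c :: t') = FreeGroup.mk [a] * FreeGroup.mk (c :: t') := by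
            rw [mul_mk]; rfl
          rw [hmm]; group
        · rw [hw2, hz0w]
          simp [invRev_cons]

lemma finite_norm_eq [Finite α] (n : ℕ) :
    {x : FreeGroup α | FreeGroup.norm x = n}.Finite := by
  have h1 : {x : FreeGroup α | FreeGroup.norm x = n}
      ⊆ FreeGroup.toWord ⁻¹' {l | l.length = n} := fun x hx => hx
  exact (Set.Finite.preimage (toWord_injective.injOn) (List.finite_length_eq _ n)).subset h1

variable {c : FreeGroup α} {k : ℕ}

lemma norm_ge (hk : IsLeast {n : ℕ | ∃ x : FreeGroup α, IsConj c x ∧ FreeGroup.norm x = n} k)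
    {x : FreeGroup α} (hx : IsConj c x) : k ≤ FreeGroup.norm x := hk.2 ⟨x, hx, rfl⟩

lemma conj_ne_one (hc : c ≠ 1) {x : FreeGroup α} (hx : IsConj c x) : x ≠ 1 := by
  rintro rfl
  obtain ⟨g, hg⟩ := isConj_iff.1 hx
  apply hc
  have : c = g⁻¹ * 1 * g := by rw [← hg]; group
  rw [this]; group

lemma k_pos (hc : c ≠ 1)
    (hk : IsLeast {n : ℕ | ∃ x : FreeGroup α, IsConj c x ∧ FreeGroup.norm x = n} k) :
    1 ≤ k := by
  obtain ⟨x, hx, hn⟩ := hk.1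
  rcases Nat.eq_zero_or_pos k with h | h
  · rw [h] at hn
    exact absurd (FreeGroup.norm_eq_zero.1 hn) (conj_ne_one hc hx)
  · exact h

lemma cr_of_norm_eq_k
    (hk : IsLeast {n : ℕ | ∃ x : FreeGroup α, IsConj c x ∧ FreeGroup.norm x = n} k)
    {x : FreeGroup α} (hx : IsConj c x) (hn : FreeGroup.norm x = k) : CR x.toWord := by
  obtain ⟨u, y, hcy, hxe, hxw⟩ := decomp x
  have hyx : IsConj y x := isConj_iff.2 ⟨FreeGroup.mk u, hxe.symm⟩
  have hconjy : IsConj c y := hx.trans hyx.symm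
  have hky : k ≤ FreeGroup.norm y := norm_ge hk hconjy
  have hlen : FreeGroup.norm x = u.length + FreeGroup.norm y + u.length := by
    show x.toWord.length = u.length + y.toWord.length + u.length
    rw [hxw]; simp [invRev_length]; try omega
  have hu : u = [] := by
    rw [hn] at hlen
    have := List.length_eq_zero_iff.1 (by omega : u.length = 0)
    exact this
  subst hu
  have : x.toWord = y.toWord := by simpa [invRev] using hxw
  rw [this]; exact hcy

lemma norm_eq_k_of_cr (hc : c ≠ 1)
    (hk : IsLeast {n : ℕ | ∃ x : FreeGroup α, IsConj c x ∧ FreeGroup.norm x = n} k)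
    {x : FreeGroup α} (hx : IsConj c x) (hcr : CR x.toWord) : FreeGroup.norm x = k := by
  obtain ⟨x₀, hx₀, hn₀⟩ := hk.1
  have hx₀ne : x₀ ≠ 1 := conj_ne_one hc hx₀
  have hcr₀ : CR x₀.toWord := cr_of_norm_eq_k hk hx₀ hn₀
  have hconj : IsConj x₀ x := (hx₀.symm).trans hx
  obtain ⟨g, hg⟩ := isConj_iff.1 hconj
  have hg' : FreeGroup.mk g.toWord * x₀ * (FreeGroup.mk g.toWord)⁻¹ = x := by
    rw [mk_toWord]; exact hg
  obtain ⟨u, y', hcy', hny', hey', hwy'⟩ := conj_cr g.toWord hx₀ne hcr₀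
  rw [hg'] at hwy'
  cases u with
  | nil =>
    have : x.toWord = y'.toWord := by simpa [invRev] using hwy'
    have : FreeGroup.norm x = FreeGroup.norm y' := by
      show x.toWord.length = y'.toWord.length
      rw [this]
    rw [this, hny', hn₀]
  | cons d t =>
    exfalso
    have hhead : x.toWord.head? = some d := by rw [hwy']; simp
    have hlast : x.toWord.getLast? = some (inv1 d) := by
      rw [hwy', invRev_cons]
      rw [List.append_assoc, List.getLast?_append]
      simp
    exact hcr d hhead (inv1 d) hlast rfl

lemma strip_letter (hc : c ≠ 1)
    (hk : IsLeast {n : ℕ | ∃ x : FreeGroup α, IsConj c x ∧ FreeGroup.norm x = n} k)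
    {z : FreeGroup α} (hz : IsConj c z) (hn : k < FreeGroup.norm z) :
    ∃ (a : α × Bool) (y : FreeGroup α), IsConj c y ∧ FreeGroup.norm y + 2 = FreeGroup.norm z ∧ y ≠ 1 ∧
      (∀ h ∈ y.toWord.head?, h ≠ inv1 a) ∧ (∀ l ∈ y.toWord.getLast?, l ≠ a) ∧
      z = FreeGroup.mk [a] * y * (FreeGroup.mk [a])⁻¹ := by
  have hncr : ¬ CR z.toWord := fun h => absurd (norm_eq_k_of_cr hc hk hz h) (by omega)
  obtain ⟨a, s, hw⟩ := not_cr_decomp hncr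
  have hred : Red' z.toWord := red'_toWord z
  have hw' : z.toWord = (a :: s) ++ [inv1 a] := by rw [hw]; simp
  rw [hw'] at hred
  obtain ⟨h₁, _, hj⟩ := List.isChain_append.1 hred
  have hsne : s ≠ [] := by
    rintro rfl
    exact hj a (by simp) (inv1 a) (by simp) rfl
  have hs : Red' s := h₁.tail
  have hys : (FreeGroup.mk s).toWord = s := toWord_mk' hs
  refine ⟨a, FreeGroup.mk s, ?_, ?_, ?_, ?_, ?_, ?_⟩
  · apply hz.trans
    apply IsConj.symm
    apply isConj_iff.2
    refine ⟨FreeGroup.mk [a], ?_⟩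
    conv_rhs => rw [← mk_toWord (x := z), hw']
    rw [inv_mk, invRev_singleton, mul_mk, mul_mk]
    rfl
  · show (FreeGroup.mk s).toWord.length + 2 = z.toWord.length
    rw [hys, hw']; simp
  · intro h1
    rw [← toWord_eq_nil_iff, hys] at h1
    exact hsne h1
  · intro h hh
    rw [hys] at hh
    cases s with
    | nil => simp at hh
    | cons b s' =>
      simp only [List.head?_cons, Option.mem_def, Option.some.injEq] at hh
      subst hh
      exact (List.isChain_cons_cons.1 h₁).1
  · intro l hl
    rw [hys] at hl
    have hl' : (a :: s).getLast? = some l := List.mem_getLast?_cons hl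
    intro he
    exact hj l hl' (inv1 a) (by simp) (by rw [he])
  · conv_lhs => rw [← mk_toWord (x := z), hw']
    rw [inv_mk, invRev_singleton, mul_mk, mul_mk]
    rfl

section Counting

variable [Fintype α]

attribute [local instance] Classical.propDecidable

set_option maxHeartbeats 1000000 in
lemma card_step (hc : c ≠ 1)
    (hk : IsLeast {n : ℕ | ∃ x : FreeGroup α, IsConj c x ∧ FreeGroup.norm x = n} k)
    (m : ℕ) (hm : k ≤ m) :
    {x : FreeGroup α | IsConj c x ∧ FreeGroup.norm x = m + 2}.ncard
      = (if m = k then 2 * Fintype.card α - 2 else 2 * Fintype.card α - 1)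
        * {x : FreeGroup α | IsConj c x ∧ FreeGroup.norm x = m}.ncard := by
  have hk1 : 1 ≤ k := k_pos hc hk
  set Sm : Set (FreeGroup α) := {x | IsConj c x ∧ FreeGroup.norm x = m} with hSm
  have hfin : Sm.Finite := (finite_norm_eq m).subset (fun x hx => hx.2)
  set s : Finset (FreeGroup α) := hfin.toFinset with hs
  have hmem_s : ∀ y, y ∈ s ↔ IsConj c y ∧ FreeGroup.norm y = m := by
    intro y; rw [hs, Set.Finite.mem_toFinset]; rfl
  -- elements of Sm are nonidentity
  have hne1 : ∀ y ∈ s, y ≠ 1 := fun y hy => conj_ne_one hc ((hmem_s y).1 hy).1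
  set cond : (α × Bool) → FreeGroup α → Prop :=
    fun a y => (∀ h ∈ y.toWord.head?, h ≠ inv1 a) ∧ (∀ l ∈ y.toWord.getLast?, l ≠ a)
      with hcond
  set g : FreeGroup α → Finset (α × Bool) :=
    fun y => Finset.univ.filter (fun a => cond a y) with hg
  set t : Finset ((α × Bool) × FreeGroup α) :=
    s.biUnion (fun y => (g y).image (fun a => (a, y))) with ht
  have hmem_t : ∀ q : (α × Bool) × FreeGroup α,
      q ∈ t ↔ (IsConj c q.2 ∧ FreeGroup.norm q.2 = m) ∧ cond q.1 q.2 := by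
    rintro ⟨a, y⟩
    rw [ht, Finset.mem_biUnion]
    constructor
    · rintro ⟨y', hy', hq⟩
      rw [Finset.mem_image] at hq
      obtain ⟨a', ha', heq⟩ := hq
      cases heq
      exact ⟨(hmem_s _).1 hy', (Finset.mem_filter.1 ha').2⟩
    · rintro ⟨hy, hcnd⟩
      exact ⟨y, (hmem_s y).2 hy, Finset.mem_image.2 ⟨a, Finset.mem_filter.2 ⟨Finset.mem_univ _, hcnd⟩, rfl⟩⟩
  set Φ : (α × Bool) × FreeGroup α → FreeGroup α :=
    fun q => FreeGroup.mk [q.1] * q.2 * (FreeGroup.mk [q.1])⁻¹ with hΦ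
  -- key toWord computation for members of t
  have htoword : ∀ q ∈ t, (Φ q).toWord = q.1 :: (q.2.toWord ++ [inv1 q.1]) := by
    rintro ⟨a, y⟩ hq
    obtain ⟨⟨hconj, hnorm⟩, h1, h2⟩ := (hmem_t _).1 hq
    exact conj_letter (conj_ne_one hc hconj) a h1 h2
  -- image equality
  have himg : {x : FreeGroup α | IsConj c x ∧ FreeGroup.norm x = m + 2} = Φ '' ↑t := by
    ext z
    constructor
    · rintro ⟨hz, hn⟩
      obtain ⟨a, y, hyc, hyn, hyne, h1, h2, hze⟩ :=
        strip_letter hc hk hz (by omega : k < FreeGroup.norm z)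
      refine ⟨(a, y), ?_, hze.symm⟩
      rw [Finset.mem_coe, hmem_t]
      refine ⟨⟨hyc, ?_⟩, h1, h2⟩
      show FreeGroup.norm y = m
      omega
    · rintro ⟨⟨a, y⟩, hq, rfl⟩
      rw [Finset.mem_coe] at hq
      obtain ⟨⟨hconj, hnorm⟩, h1, h2⟩ := (hmem_t _).1 hq
      have hw : (Φ (a, y)).toWord = a :: (y.toWord ++ [inv1 a]) := htoword _ hq
      constructor
      · refine hconj.trans (isConj_iff.2 ⟨FreeGroup.mk [a], rfl⟩)
      · have hst : FreeGroup.norm (Φ (a, y)) = FreeGroup.norm y + 2 := by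
          show (Φ (a, y)).toWord.length = y.toWord.length + 2
          rw [hw]; simp
        show FreeGroup.norm (Φ (a, y)) = m + 2
        rw [hst, hnorm]
  -- injectivity
  have hinj : Set.InjOn Φ ↑t := by
    rintro ⟨a1, y1⟩ hq1 ⟨a2, y2⟩ hq2 heq
    rw [Finset.mem_coe] at hq1 hq2
    have hw1 : (Φ (a1, y1)).toWord = a1 :: (y1.toWord ++ [inv1 a1]) := htoword _ hq1
    have hw2 : (Φ (a2, y2)).toWord = a2 :: (y2.toWord ++ [inv1 a2]) := htoword _ hq2
    have hww : (Φ (a1, y1)).toWord = (Φ (a2, y2)).toWord := by rw [heq]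
    rw [hw1, hw2] at hww
    injection hww with ha htl
    subst ha
    have : y1.toWord = y2.toWord := List.append_cancel_right htl
    rw [Prod.mk.injEq]
    exact ⟨rfl, toWord_inj.1 this⟩
  -- cardinality of each fiber of letters
  have hcardg : ∀ y ∈ s, (g y).card
      = (if m = k then 2 * Fintype.card α - 2 else 2 * Fintype.card α - 1) := by
    intro y hy
    obtain ⟨hconj, hnorm⟩ := (hmem_s y).1 hy
    have hyne : y ≠ 1 := conj_ne_one hc hconj
    have hYne : y.toWord ≠ [] := fun h => hyne (toWord_eq_nil_iff.1 h)
    set h0 := y.toWord.head hYne with hh0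
    set l0 := y.toWord.getLast hYne with hl0
    have hhead : y.toWord.head? = some h0 := List.head?_eq_head hYne
    have hlast : y.toWord.getLast? = some l0 := List.getLast?_eq_getLast hYne
    have hcnd : ∀ a, cond a y ↔ (a ≠ inv1 h0 ∧ a ≠ l0) := by
      intro a
      rw [hcond]
      constructor
      · rintro ⟨c1, c2⟩
        refine ⟨?_, ?_⟩
        · intro haa
          exact c1 h0 (by rw [hhead]; rfl) (by rw [haa, inv1_inv1])
        · intro haa
          exact c2 l0 (by rw [hlast]; rfl) haa.symm
      · rintro ⟨c1, c2⟩
        constructor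
        · intro h hh he
          rw [Option.mem_def, hhead] at hh
          have hh' : h0 = h := by simpa using hh
          apply c1
          have h2' : h0 = inv1 a := hh'.trans he
          rw [h2', inv1_inv1]
        · intro l hl he
          rw [Option.mem_def, hlast] at hl
          have hl' : l0 = l := by simpa using hl
          exact c2 (hl'.trans he).symm
    have hgy : g y = Finset.univ \ {inv1 h0, l0} := by
      ext a
      simp only [hg, Finset.mem_filter, Finset.mem_univ, true_and, Finset.mem_sdiff,
        Finset.mem_insert, Finset.mem_singleton]
      rw [hcnd a]
      tauto
    rw [hgy, Finset.card_sdiff_of_subset (Finset.subset_univ _)]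
    have hcu : (Finset.univ : Finset (α × Bool)).card = 2 * Fintype.card α := by
      rw [Finset.card_univ, Fintype.card_prod, Fintype.card_bool]
      ring
    by_cases hmk : m = k
    · -- y is cyclically reduced: l0 ≠ inv1 h0
      have hcr : CR y.toWord := cr_of_norm_eq_k hk hconj (by rw [hnorm, hmk])
      have : l0 ≠ inv1 h0 := hcr h0 (by rw [hhead]; rfl) l0 (by rw [hlast]; rfl)
      have hcard2 : ({inv1 h0, l0} : Finset (α × Bool)).card = 2 := by
        rw [Finset.card_insert_of_notMem (by simpa using (this ∘ Eq.symm)), Finset.card_singleton]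
      rw [if_pos hmk, hcard2, hcu]
    · -- y is not cyclically reduced: l0 = inv1 h0
      have hncr : ¬ CR y.toWord := by
        intro h
        exact hmk (by rw [← hnorm, norm_eq_k_of_cr hc hk hconj h])
      have hviol : l0 = inv1 h0 := by
        by_contra hne
        apply hncr
        intro p hp q hq
        rw [Option.mem_def, hhead] at hp
        rw [Option.mem_def, hlast] at hq
        have hp' : h0 = p := by simpa using hp
        have hq' : l0 = q := by simpa using hq
        rw [← hp', ← hq']
        exact hne
      have hcard1 : ({inv1 h0, l0} : Finset (α × Bool)).card = 1 := by
        rw [hviol]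
        simp
      rw [if_neg hmk, hcard1, hcu]
  -- assemble
  have hcards : t.card = s.card
      * (if m = k then 2 * Fintype.card α - 2 else 2 * Fintype.card α - 1) := by
    rw [ht, Finset.card_biUnion]
    · have hterm : ∀ y ∈ s, ((g y).image (fun a => (a, y))).card = (g y).card := by
        intro y hy
        exact Finset.card_image_of_injective _ (fun a b hab => (Prod.ext_iff.1 hab).1)
      rw [Finset.sum_congr rfl hterm]
      exact Finset.sum_const_nat hcardg
    · intro y1 h1 y2 h2 hne
      rw [Function.onFun, Finset.disjoint_left]
      rintro ⟨a, y⟩ ha hb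
      rw [Finset.mem_image] at ha hb
      obtain ⟨a1, -, he1⟩ := ha
      obtain ⟨a2, -, he2⟩ := hb
      apply hne
      have e1 : y = y1 := by cases he1; rfl
      have e2 : y = y2 := by cases he2; rfl
      rw [← e1, ← e2]
  rw [himg, Set.ncard_image_of_injOn hinj, Set.ncard_coe_finset, hcards]
  have : Sm.ncard = s.card := Set.ncard_eq_toFinset_card Sm hfin
  rw [hSm] at this
  rw [← this]
  ring

end Counting

lemma card_formula [Fintype α] (hc : c ≠ 1)
    (hk : IsLeast {n : ℕ | ∃ x : FreeGroup α, IsConj c x ∧ FreeGroup.norm x = n} k)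
    (m : ℕ) : {x : FreeGroup α | IsConj c x ∧ FreeGroup.norm x = k + 2 * (m + 1)}.ncard
      = (2 * Fintype.card α - 2) * (2 * Fintype.card α - 1) ^ m
        * {x : FreeGroup α | IsConj c x ∧ FreeGroup.norm x = k}.ncard := by
  induction m with
  | zero =>
    have h0 := card_step hc hk k le_rfl
    rw [if_pos rfl] at h0
    have he : k + 2 * (0 + 1) = k + 2 := by ring
    rw [he]
    simpa using h0
  | succ j ih =>
    have hstep := card_step hc hk (k + 2 * (j + 1)) (by omega)
    rw [if_neg (by omega)] at hstep
    have he : k + 2 * (j + 1 + 1) = k + 2 * (j + 1) + 2 := by ring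
    rw [he, hstep, ih]
    ring

end Stmt16Aux


open Stmt16Aux in
/-- For a non-trivial conjugacy class `𝔠` of the free group on `p ≥ 2` generators with
minimal word length `k`, and `h = log(2p-1)`, the limit
`lim_{m→∞} #𝔠_{k+2m}/e^{mh}` exists and equals `(2p-2)(2p-1)⁻¹ ⬝ #𝔠_k`. -/
theorem stmt16 (p : ℕ) (hp : 2 ≤ p) (c : FreeGroup (Fin p)) (hc : c ≠ 1) (k : ℕ)
    (hk : IsLeast {n : ℕ | ∃ x : FreeGroup (Fin p), IsConj c x ∧ FreeGroup.norm x = n} k) :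
    Tendsto (fun m : ℕ =>
        (Set.ncard {x : FreeGroup (Fin p) | IsConj c x ∧ FreeGroup.norm x = k + 2 * m} : ℝ)
          / Real.exp (m * Real.log (2 * p - 1)))
      atTop
      (𝓝 ((2 * p - 2) / (2 * p - 1)
        * (Set.ncard {x : FreeGroup (Fin p) | IsConj c x ∧ FreeGroup.norm x = k} : ℝ))) := by
  set A : ℕ := Set.ncard {x : FreeGroup (Fin p) | IsConj c x ∧ FreeGroup.norm x = k} with hA
  have hppos : (0 : ℝ) < 2 * (p : ℝ) - 1 := by
    have : (2 : ℝ) ≤ (p : ℝ) := by exact_mod_cast hp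
    linarith
  have hpne : (2 * (p : ℝ) - 1) ≠ 0 := ne_of_gt hppos
  have he2 : ((2 * p - 2 : ℕ) : ℝ) = 2 * (p : ℝ) - 2 := by
    have h : (2 : ℕ) ≤ 2 * p := by omega
    rw [Nat.cast_sub h]; push_cast; ring
  have he1 : ((2 * p - 1 : ℕ) : ℝ) = 2 * (p : ℝ) - 1 := by
    have h : (1 : ℕ) ≤ 2 * p := by omega
    rw [Nat.cast_sub h]; push_cast; ring
  have hev : (fun m : ℕ =>
        (Set.ncard {x : FreeGroup (Fin p) | IsConj c x ∧ FreeGroup.norm x = k + 2 * m} : ℝ)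
          / Real.exp (m * Real.log (2 * p - 1)))
      =ᶠ[atTop] (fun _ : ℕ => (2 * (p : ℝ) - 2) / (2 * (p : ℝ) - 1) * (A : ℝ)) := by
    filter_upwards [eventually_ge_atTop 1] with m hm
    obtain ⟨j, rfl⟩ : ∃ j, m = j + 1 := ⟨m - 1, by omega⟩
    have hnum := card_formula hc hk j
    rw [Fintype.card_fin] at hnum
    rw [hnum]
    have hd : Real.exp (((j + 1 : ℕ) : ℝ) * Real.log (2 * (p : ℝ) - 1))
        = (2 * (p : ℝ) - 1) ^ (j + 1) := by
      rw [Real.exp_nat_mul, Real.exp_log hppos]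
    rw [← hA, Nat.cast_mul, Nat.cast_mul, Nat.cast_pow, he1, he2, hd]
    have hpowne : (2 * (p : ℝ) - 1) ^ (j + 1) ≠ 0 := pow_ne_zero _ hpne
    field_simp
    ring
  exact Tendsto.congr' hev.symm tendsto_const_nhds
end

section
/- Let Γ be the free group on p ≥ 2 generators acting convex co-compactly on a CAT(-1) space (X,d) with base point o, and suppose the set {d(o,xo) − λ|x| : x ∈ Γ} is bounded, where λ is the average displacement growth rate. Then for every non-identity x ∈ Γ, the stable translation length ℓ(x) = lim_n d(o,x^n o)/n satisfies ℓ(x) = λ‖x‖ where ‖x‖ = lim_n |x^n|/n. In particular the set {ℓ(x) : x ∈ Γ, x ≠ 1} is contained in λℤ. -/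
open Filter
open scoped Topology

namespace Stmt19Aux

open FreeGroup List

variable {α : Type*} [DecidableEq α]

/-- The non-cancellation relation on letters. -/
def R : (α × Bool) → (α × Bool) → Prop := fun a b => ¬(a.1 = b.1 ∧ a.2 = !b.2)

/-- Cyclic reducedness condition: the last letter does not cancel the first. -/
def Cyc (L : List (α × Bool)) : Prop :=
  ∀ p q, L.getLast? = some p → L.head? = some q → R p q

lemma reduce_eq_of_chain : ∀ {L : List (α × Bool)}, List.Chain' R L → FreeGroup.reduce L = L := by
  intro L h
  induction L with
  | nil => rfl
  | cons a t ih =>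
    rw [FreeGroup.reduce.cons, ih h.tail]
    cases t with
    | nil => rfl
    | cons b t' =>
      have hab : R a b := (List.isChain_cons_cons.1 h).1
      simp only [if_neg hab]

omit [DecidableEq α] in
lemma exists_of_not_chain' {r : (α × Bool) → (α × Bool) → Prop} :
    ∀ {L : List (α × Bool)}, ¬ List.Chain' r L →
      ∃ A p q B, L = A ++ p :: q :: B ∧ ¬ r p q := by
  intro L
  induction L with
  | nil => intro h; exact absurd List.isChain_nil h
  | cons a t ih =>
    intro h
    cases t with
    | nil => exact absurd (List.isChain_singleton a) h
    | cons b t' =>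
      unfold List.Chain' at h
      rw [List.isChain_cons_cons] at h
      by_cases hab : r a b
      · have : ¬ List.Chain' r (b :: t') := fun hc => h ⟨hab, hc⟩
        obtain ⟨A, p, q, B, hA, hpq⟩ := ih this
        exact ⟨a :: A, p, q, B, by rw [hA]; rfl, hpq⟩
      · exact ⟨[], a, b, t', rfl, hab⟩

lemma chain_of_reduce {L : List (α × Bool)} (h : FreeGroup.reduce L = L) :
    List.Chain' R L := by
  by_contra hc
  obtain ⟨A, p, q, B, hA, hpq⟩ := exists_of_not_chain' hc
  rw [R, not_not] at hpq
  have hq : q = (p.1, !p.2) := by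
    have h1 : q.1 = p.1 := hpq.1.symm
    have h2 : q.2 = !p.2 := by rw [hpq.2, Bool.not_not]
    exact Prod.ext h1 h2
  have : FreeGroup.reduce L = A ++ (p.1, p.2) :: (p.1, !p.2) :: B := by
    rw [h, hA, hq]
  exact FreeGroup.reduce.not this

omit [DecidableEq α] in
lemma chain_flatten {w : List (α × Bool)} (hw : w ≠ []) (hc : List.Chain' R w)
    (hcyc : Cyc w) (n : ℕ) :
    List.Chain' R (List.flatten (List.replicate n w)) := by
  have hnil : ([] : List (α × Bool)) ∉ List.replicate n w := by
    intro hmem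
    exact hw (List.eq_of_mem_replicate hmem).symm
  unfold List.Chain'
  rw [List.isChain_flatten hnil]
  constructor
  · intro l hl
    rw [List.eq_of_mem_replicate hl]
    exact hc
  · have : ∀ᵉ (x ∈ w.getLast?) (y ∈ w.head?), R x y := by
      intro x hx y hy
      exact hcyc x y hx hy
    exact List.isChain_replicate_of_rel n this

lemma norm_mk_pow {w : List (α × Bool)} (hw : w ≠ []) (hc : List.Chain' R w)
    (hcyc : Cyc w) (n : ℕ) :
    FreeGroup.norm (FreeGroup.mk w ^ n) = n * w.length := by
  rw [FreeGroup.pow_mk]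
  show (FreeGroup.mk (List.flatten (List.replicate n w))).toWord.length = n * w.length
  rw [FreeGroup.toWord_mk, reduce_eq_of_chain (chain_flatten hw hc hcyc n)]
  simp [List.length_flatten, List.map_replicate, List.sum_replicate, smul_eq_mul]

lemma decomp : ∀ (N : ℕ) (x : FreeGroup α), x.toWord.length ≤ N → x ≠ 1 →
    ∃ (g : FreeGroup α) (w : List (α × Bool)),
      w ≠ [] ∧ List.Chain' R w ∧ Cyc w ∧ x = g * FreeGroup.mk w * g⁻¹ := by
  intro N
  induction N with
  | zero =>
    intro x h hx
    exact absurd (FreeGroup.toWord_eq_nil_iff.mp (List.eq_nil_of_length_eq_zero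
      (Nat.le_zero.mp h))) hx
  | succ N ih =>
    intro x hlen hx
    have hLne : x.toWord ≠ [] := fun h => hx (FreeGroup.toWord_eq_nil_iff.mp h)
    have hchain : List.Chain' R x.toWord := chain_of_reduce (FreeGroup.reduce_toWord x)
    by_cases hcyc : Cyc x.toWord
    · exact ⟨1, x.toWord, hLne, hchain, hcyc, by simp [FreeGroup.mk_toWord]⟩
    · rw [Cyc] at hcyc
      push_neg at hcyc
      obtain ⟨b, q, hb, hq, hbq⟩ := hcyc
      rw [R, not_not] at hbq
      -- x.toWord = q :: t
      obtain ⟨t, ht⟩ : ∃ t, x.toWord = q :: t := by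
        cases hL : x.toWord with
        | nil => exact absurd hL hLne
        | cons a t =>
          rw [hL] at hq
          simp at hq
          exact ⟨t, by rw [hq]⟩
      have htne : t ≠ [] := by
        rintro rfl
        rw [ht] at hb
        simp at hb
        rw [← hb] at hbq
        simpa using hbq.2
      obtain ⟨M, b', hMb⟩ : ∃ M b', t = M ++ [b'] := by
        rcases List.eq_nil_or_concat t with h | ⟨M, c, h⟩
        · exact absurd h htne
        · exact ⟨M, c, by rw [h, List.concat_eq_append]⟩
      have hb' : b' = b := by
        rw [ht, hMb] at hb
        rw [List.getLast?_cons, List.getLast?_append] at hb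
        simp at hb
        exact hb
      subst hb'
      have hbval : b' = (q.1, !q.2) := by
        have h1 : b'.1 = q.1 := hbq.1
        have h2 : b'.2 = !q.2 := hbq.2
        exact Prod.ext h1 h2
      -- decomposition of x
      have hxval : x = FreeGroup.mk [q] * FreeGroup.mk M * (FreeGroup.mk [q])⁻¹ := by
        have hinv : (FreeGroup.mk [q])⁻¹ = FreeGroup.mk [b'] := by
          rw [FreeGroup.inv_mk]
          congr 1
          simp [FreeGroup.invRev, hbval]
        rw [hinv, FreeGroup.mul_mk, FreeGroup.mul_mk, ← FreeGroup.mk_toWord (x := x), ht, hMb]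
        rfl
      have hMchain : List.Chain' R M := by
        refine hchain.infix ⟨[q], [b'], ?_⟩
        rw [ht, hMb]
        simp
      have hMword : (FreeGroup.mk M).toWord = M := by
        rw [FreeGroup.toWord_mk, reduce_eq_of_chain hMchain]
      have hMne : FreeGroup.mk M ≠ 1 := by
        intro h1
        exact hx (by rw [hxval, h1, mul_one, mul_inv_cancel])
      have hMlen : (FreeGroup.mk M).toWord.length ≤ N := by
        rw [hMword]
        have : x.toWord.length = M.length + 2 := by
          rw [ht, hMb]; simp
        omega
      obtain ⟨g, w, hw, hwc, hwcyc, hgw⟩ := ih (FreeGroup.mk M) hMlen hMne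
      refine ⟨FreeGroup.mk [q] * g, w, hw, hwc, hwcyc, ?_⟩
      rw [hxval, hgw]
      group

lemma conj_pow_eq {G : Type*} [Group G] (g h : G) (n : ℕ) :
    (g * h * g⁻¹) ^ n = g * h ^ n * g⁻¹ := by
  induction n with
  | zero => simp
  | succ n ih => rw [pow_succ, pow_succ, ih]; group

lemma norm_pow_bound (x : FreeGroup α) (hx : x ≠ 1) :
    ∃ k c : ℕ, 1 ≤ k ∧ ∀ n : ℕ,
      FreeGroup.norm (x ^ n) ≤ n * k + c ∧ n * k ≤ FreeGroup.norm (x ^ n) + c := by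
  obtain ⟨g, w, hw, hwc, hwcyc, hgw⟩ := decomp x.toWord.length x le_rfl hx
  refine ⟨w.length, 2 * FreeGroup.norm g, Nat.one_le_iff_ne_zero.mpr
    (by simpa using hw), fun n => ?_⟩
  have hpow : x ^ n = g * (FreeGroup.mk w) ^ n * g⁻¹ := by
    rw [hgw, conj_pow_eq]
  have hnw : FreeGroup.norm ((FreeGroup.mk w) ^ n) = n * w.length :=
    norm_mk_pow hw hwc hwcyc n
  constructor
  · calc FreeGroup.norm (x ^ n) ≤ FreeGroup.norm (g * (FreeGroup.mk w) ^ n)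
          + FreeGroup.norm g⁻¹ := by rw [hpow]; exact FreeGroup.norm_mul_le _ _
    _ ≤ FreeGroup.norm g + FreeGroup.norm ((FreeGroup.mk w) ^ n) + FreeGroup.norm g⁻¹ :=
        Nat.add_le_add_right (FreeGroup.norm_mul_le _ _) _
    _ = n * w.length + 2 * FreeGroup.norm g := by
        rw [hnw, FreeGroup.norm_inv_eq]; ring
  · have hrev : (FreeGroup.mk w) ^ n = g⁻¹ * x ^ n * g := by
      rw [hpow]; group
    calc n * w.length = FreeGroup.norm ((FreeGroup.mk w) ^ n) := hnw.symm
    _ ≤ FreeGroup.norm (g⁻¹ * x ^ n) + FreeGroup.norm g := by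
        rw [hrev]; exact FreeGroup.norm_mul_le _ _
    _ ≤ FreeGroup.norm g⁻¹ + FreeGroup.norm (x ^ n) + FreeGroup.norm g :=
        Nat.add_le_add_right (FreeGroup.norm_mul_le _ _) _
    _ = FreeGroup.norm (x ^ n) + 2 * FreeGroup.norm g := by
        rw [FreeGroup.norm_inv_eq]; ring

lemma tendsto_div_of_bound (f : ℕ → ℝ) (a C : ℝ) (h : ∀ n : ℕ, |f n - n * a| ≤ C) :
    Tendsto (fun n : ℕ => f n / n) atTop (𝓝 a) := by
  have h0 : Tendsto (fun n : ℕ => f n / n - a) atTop (𝓝 0) := by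
    apply squeeze_zero_norm' (a := fun n : ℕ => C / n)
    · filter_upwards [eventually_ge_atTop 1] with n hn
      have hn' : (0:ℝ) < n := by exact_mod_cast hn
      rw [Real.norm_eq_abs]
      have heq : f n / n - a = (f n - n * a) / n := by field_simp
      rw [heq, abs_div, abs_of_pos hn']
      gcongr
      exact h n
    · exact tendsto_const_div_atTop_nhds_zero_nat C
  have := h0.add (tendsto_const_nhds (x := a))
  simpa using this

end Stmt19Aux

/-- Suppose the free group on `p ≥ 2` generators acts (convex co-compactly on a
CAT(-1) space) by isometries on `X` with base point `o`, `λ` is the average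
displacement growth rate (limit of the sphere averages of `d(o,xo)/n`), and the set
`{d(o,xo) − λ|x| : x ∈ Γ}` is bounded. Then for every `x ≠ 1`, the stable translation
length `ℓ(x) = lim d(o,xⁿo)/n` and the stable word length `‖x‖ = lim |xⁿ|/n` exist and
satisfy `ℓ(x) = λ‖x‖`; in particular `ℓ(x) ∈ λℤ`. -/
theorem stmt19 (p : ℕ) (hp : 2 ≤ p) (X : Type*) [MetricSpace X]
    [MulAction (FreeGroup (Fin p)) X]
    (hiso : ∀ g : FreeGroup (Fin p), Isometry (fun x : X => g • x)) (o : X)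
    (lam : ℝ)
    (hlam : Tendsto (fun n : ℕ =>
        (∑ᶠ x ∈ {x : FreeGroup (Fin p) | FreeGroup.norm x = n}, dist o (x • o))
          / ((Set.ncard {x : FreeGroup (Fin p) | FreeGroup.norm x = n}) * n))
      atTop (𝓝 lam))
    (hbdd : ∃ B : ℝ, ∀ x : FreeGroup (Fin p),
      |dist o (x • o) - lam * FreeGroup.norm x| ≤ B) :
    ∀ x : FreeGroup (Fin p), x ≠ 1 →
      ∃ l nl : ℝ,
        Tendsto (fun n : ℕ => dist o (x ^ n • o) / n) atTop (𝓝 l) ∧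
        Tendsto (fun n : ℕ => (FreeGroup.norm (x ^ n) : ℝ) / n) atTop (𝓝 nl) ∧
        l = lam * nl ∧ ∃ z : ℤ, l = lam * z := by
  intro x hx
  obtain ⟨B, hB⟩ := hbdd
  obtain ⟨k, c, hk, hkc⟩ := Stmt19Aux.norm_pow_bound x hx
  have hnormbd : ∀ n : ℕ, |(FreeGroup.norm (x ^ n) : ℝ) - n * k| ≤ c := by
    intro n
    rw [abs_sub_le_iff]
    obtain ⟨h1, h2⟩ := hkc n
    constructor
    · have : (FreeGroup.norm (x ^ n) : ℝ) ≤ n * k + c := by exact_mod_cast h1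
      linarith
    · have : ((n : ℝ)) * k ≤ FreeGroup.norm (x ^ n) + c := by exact_mod_cast h2
      linarith
  refine ⟨lam * k, k, ?_, ?_, rfl, ⟨(k : ℤ), by push_cast; ring⟩⟩
  · apply Stmt19Aux.tendsto_div_of_bound _ (lam * k) (B + |lam| * c)
    intro n
    have h1 : |dist o (x ^ n • o) - lam * FreeGroup.norm (x ^ n)| ≤ B := hB (x ^ n)
    calc |dist o (x ^ n • o) - n * (lam * k)|
        = |(dist o (x ^ n • o) - lam * FreeGroup.norm (x ^ n))
          + lam * ((FreeGroup.norm (x ^ n) : ℝ) - n * k)| := by ring_nf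
      _ ≤ |dist o (x ^ n • o) - lam * FreeGroup.norm (x ^ n)|
          + |lam * ((FreeGroup.norm (x ^ n) : ℝ) - n * k)| := abs_add_le _ _
      _ ≤ B + |lam| * c := by
          refine add_le_add h1 ?_
          rw [abs_mul]
          exact mul_le_mul_of_nonneg_left (hnormbd n) (abs_nonneg lam)
  · apply Stmt19Aux.tendsto_div_of_bound _ (k : ℝ) (c : ℝ)
    intro n
    have := hnormbd n
    calc |(FreeGroup.norm (x ^ n) : ℝ) - n * k| ≤ c := this
end
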